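/- arXiv:1312.7253 — 5 statements merged into one kernel-verified Lean document; each statement's English description precedes it below -/
import Mathlib

section
/- For every edge-colored graph G, the color-line graph CL(G) contains no induced K_{1,4}; that is, no vertex of CL(G) has four pairwise nonadjacent neighbors. -/
open SimpleGraph

/-- A rainbow matching in an edge-colored graph: a set of edges of `G`, pairwise
vertex-disjoint, with pairwise distinct colors. -/
def RainbowMatching {V C : Type*} (G : SimpleGraph V) (phi : Sym2 V → C)
    (M : Set (Sym2 V)) : Prop :=
  M ⊆ G.edgeSet ∧
  (∀ e ∈ M, ∀ f ∈ M, e ≠ f → ∀ v, v ∈ e → v ∉ f) ∧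
  Set.InjOn phi M

/-- The maximum size of a rainbow matching in the edge-colored graph `(G, phi)`. -/
noncomputable def maxRainbow {V C : Type*} (G : SimpleGraph V) (phi : Sym2 V → C) : ℕ :=
  sSup {n : ℕ | ∃ M, RainbowMatching G phi M ∧ M.ncard = n}

/-- The color-line graph of an edge-colored graph: vertices are edges of `G`,
two distinct edges adjacent iff they share an endpoint or have the same color. -/
def colorLine {V C : Type*} (G : SimpleGraph V) (phi : Sym2 V → C) :
    SimpleGraph G.edgeSet where
  Adj e f := e ≠ f ∧ ((∃ v, v ∈ (e : Sym2 V) ∧ v ∈ (f : Sym2 V)) ∨ phi e = phi f)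
  symm := by
    constructor
    rintro e f ⟨hne, h⟩
    refine ⟨hne.symm, ?_⟩
    rcases h with ⟨v, hv1, hv2⟩ | h
    · exact Or.inl ⟨v, hv2, hv1⟩
    · exact Or.inr h.symm
  loopless := by constructor; rintro e ⟨hne, -⟩; exact hne rfl

/-- The color-line graph of any edge-colored graph is `K_{1,4}`-free: no vertex has
four pairwise nonadjacent neighbors. -/
theorem colorLine_K14_free {V C : Type*} (G : SimpleGraph V) (phi : Sym2 V → C) :
    ¬ ∃ e a b c d : G.edgeSet,
      a ≠ b ∧ a ≠ c ∧ a ≠ d ∧ b ≠ c ∧ b ≠ d ∧ c ≠ d ∧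
      (colorLine G phi).Adj e a ∧ (colorLine G phi).Adj e b ∧
      (colorLine G phi).Adj e c ∧ (colorLine G phi).Adj e d ∧
      ¬ (colorLine G phi).Adj a b ∧ ¬ (colorLine G phi).Adj a c ∧
      ¬ (colorLine G phi).Adj a d ∧ ¬ (colorLine G phi).Adj b c ∧
      ¬ (colorLine G phi).Adj b d ∧ ¬ (colorLine G phi).Adj c d := by
  rintro ⟨e, a, b, c, d, hab, hac, had, hbc, hbd, hcd,
    hea, heb, hec, hed, nab, nac, nad, nbc, nbd, ncd⟩
  obtain ⟨⟨x, y⟩, hxy⟩ := Quot.exists_rep (e : Sym2 V)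
  have cls : ∀ f : G.edgeSet, (colorLine G phi).Adj e f →
      x ∈ (f : Sym2 V) ∨ y ∈ (f : Sym2 V) ∨ phi (f : Sym2 V) = phi (e : Sym2 V) := by
    rintro f ⟨hne, ⟨v, hv1, hv2⟩ | hcol⟩
    · rw [← hxy] at hv1
      rcases Sym2.mem_iff.mp hv1 with rfl | rfl
      · exact Or.inl hv2
      · exact Or.inr (Or.inl hv2)
    · exact Or.inr (Or.inr hcol.symm)
  have key : ∀ f g : G.edgeSet, f ≠ g → ¬ (colorLine G phi).Adj f g →
      (∀ v : V, v ∈ (f : Sym2 V) → v ∉ (g : Sym2 V)) ∧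
        phi (f : Sym2 V) ≠ phi (g : Sym2 V) := by
    intro f g hne hn
    refine ⟨fun v hvf hvg => hn ⟨hne, Or.inl ⟨v, hvf, hvg⟩⟩, fun h => hn ⟨hne, Or.inr h⟩⟩
  rcases cls a hea with ha | ha | ha <;>
  rcases cls b heb with hb | hb | hb <;>
  rcases cls c hec with hc | hc | hc <;>
  rcases cls d hed with hd | hd | hd <;>
  first
    | exact (key a b hab nab).1 _ ha hb
    | exact (key a c hac nac).1 _ ha hc
    | exact (key a d had nad).1 _ ha hd
    | exact (key b c hbc nbc).1 _ hb hc
    | exact (key b d hbd nbd).1 _ hb hd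
    | exact (key c d hcd ncd).1 _ hc hd
    | exact (key a b hab nab).2 (ha.trans hb.symm)
    | exact (key a c hac nac).2 (ha.trans hc.symm)
    | exact (key a d had nad).2 (ha.trans hd.symm)
    | exact (key b c hbc nbc).2 (hb.trans hc.symm)
    | exact (key b d hbd nbd).2 (hb.trans hd.symm)
    | exact (key c d hcd ncd).2 (hc.trans hd.symm)
end

section
/- Let H be an edge-colored graph, let C be a cycle in H whose edge colors do not appear elsewhere in the construction, and fix a vertex v of C. Form H' from H by replacing C: cut C at v to obtain a path with both endpoints being copies of v, then attach one extra edge at each end, both extra edges colored with a new color not used in H. Then the maximum rainbow matching size of the modified graph equals the maximum rainbow matching size of H plus one. -/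
open SimpleGraph

/-- Cutting a cycle of an edge-colored graph `H` at a vertex `v` (with cycle
neighbors `a` and `b`) and attaching a pendant edge, colored with a fresh common
color `c₀`, at each of the two resulting ends increases the maximum rainbow matching
size by exactly one.  Here `Sum.inr 0` is the second copy of `v`, and `Sum.inr 1`,
`Sum.inr 2` are the two pendant vertices. -/
theorem maxRainbow_cut_cycle {V C : Type*} [Fintype V] [DecidableEq V]
    (H : SimpleGraph V) (phi : Sym2 V → C)
    (v a b : V) (hab : a ≠ b)
    (hnbr : ∀ w, H.Adj v w ↔ (w = a ∨ w = b))
    (c₀ : C) (hfresh : ∀ e ∈ H.edgeSet, phi e ≠ c₀)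
    (H' : SimpleGraph (V ⊕ Fin 3))
    (hH' : H' = SimpleGraph.fromEdgeSet
      ((Sym2.map Sum.inl '' (H.edgeSet \ {s(v, b)})) ∪
        {s(Sum.inl b, Sum.inr 0), s(Sum.inl v, Sum.inr 1), s(Sum.inr 0, Sum.inr 2)}))
    (phi' : Sym2 (V ⊕ Fin 3) → C)
    (hold : ∀ e ∈ H.edgeSet \ {s(v, b)}, phi' (Sym2.map Sum.inl e) = phi e)
    (hcut : phi' s(Sum.inl b, Sum.inr 0) = phi s(v, b))
    (hpend1 : phi' s(Sum.inl v, Sum.inr 1) = c₀)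
    (hpend2 : phi' s(Sum.inr 0, Sum.inr 2) = c₀) :
    maxRainbow H' phi' = maxRainbow H phi + 1 := by
  classical
  set F : Sym2 V → Sym2 (V ⊕ Fin 3) := Sym2.map Sum.inl with hF
  have hFinj : Function.Injective F := Sym2.map.injective Sum.inl_injective
  set cut : Sym2 (V ⊕ Fin 3) := s(Sum.inl b, Sum.inr 0) with hcutdef
  set p1 : Sym2 (V ⊕ Fin 3) := s(Sum.inl v, Sum.inr 1) with hp1def
  set p2 : Sym2 (V ⊕ Fin 3) := s(Sum.inr 0, Sum.inr 2) with hp2def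
  have hvb : H.Adj v b := (hnbr b).2 (Or.inr rfl)
  have hva : H.Adj v a := (hnbr a).2 (Or.inl rfl)
  have hvna : v ≠ a := hva.ne
  have hvnb : v ≠ b := hvb.ne
  have hea_ne_eb : s(v, a) ≠ s(v, b) := by
    intro h
    rw [Sym2.eq_iff] at h
    rcases h with ⟨-, h⟩ | ⟨h, -⟩
    · exact hab h
    · exact hvnb h
  have hmemF : ∀ (w : V) (e : Sym2 V), Sum.inl w ∈ F e ↔ w ∈ e := by
    intro w e
    constructor
    · rintro h
      rw [hF, Sym2.mem_map] at h
      obtain ⟨x, hx, hxe⟩ := h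
      obtain rfl : x = w := Sum.inl.inj hxe
      exact hx
    · intro h
      rw [hF, Sym2.mem_map]
      exact ⟨w, h, rfl⟩
  have hinrF : ∀ (j : Fin 3) (e : Sym2 V), Sum.inr j ∉ F e := by
    intro j e h
    rw [hF, Sym2.mem_map] at h
    obtain ⟨x, -, hxe⟩ := h
    exact Sum.inl_ne_inr hxe
  have hatv : ∀ e ∈ H.edgeSet, v ∈ e → e = s(v, a) ∨ e = s(v, b) := by
    intro e he hv
    have h1 := Sym2.other_spec hv
    rw [← h1] at he
    rw [SimpleGraph.mem_edgeSet] at he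
    rcases (hnbr _).1 he with h2 | h2 <;> rw [← h1, h2]
    · exact Or.inl rfl
    · exact Or.inr rfl
  -- the edge set of H'
  have hE' : H'.edgeSet = (F '' (H.edgeSet \ {s(v, b)})) ∪ {cut, p1, p2} := by
    rw [hH', edgeSet_fromEdgeSet]
    have hnd : ∀ e ∈ ((F '' (H.edgeSet \ {s(v, b)})) ∪ {cut, p1, p2} :
        Set (Sym2 (V ⊕ Fin 3))), ¬ e.IsDiag := by
      rintro e (⟨e', ⟨he', -⟩, rfl⟩ | h)
      · rw [hF, Sym2.isDiag_map Sum.inl_injective]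
        exact H.not_isDiag_of_mem_edgeSet he'
      · rcases h with h | h | h <;> subst h <;> simp [hcutdef, hp1def, hp2def]
    ext e
    simp only [Set.mem_diff, Set.mem_setOf_eq]
    exact ⟨fun h => h.1, fun h => ⟨h, hnd e h⟩⟩
  have hcutE' : cut ∈ H'.edgeSet := by rw [hE']; right; left; rfl
  have hp1E' : p1 ∈ H'.edgeSet := by rw [hE']; right; right; left; rfl
  have hp2E' : p2 ∈ H'.edgeSet := by rw [hE']; right; right; right; rfl
  have hp1np2 : p1 ≠ p2 := by
    intro h
    rw [hp1def, hp2def, Sym2.eq_iff] at h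
    rcases h with ⟨h, -⟩ | ⟨h, -⟩ <;> exact Sum.inl_ne_inr h
  -- the transfer map
  set Ψ : Sym2 V → Sym2 (V ⊕ Fin 3) := fun e => if e = s(v, b) then cut else F e with hΨ
  have hΨb : Ψ s(v, b) = cut := by simp [hΨ]
  have hΨne : ∀ e, e ≠ s(v, b) → Ψ e = F e := by intro e he; simp [hΨ, he]
  have hinr0Ψ : ∀ e, Sum.inr 0 ∈ Ψ e → e = s(v, b) := by
    intro e h
    by_contra hne
    rw [hΨne e hne] at h
    exact hinrF 0 e h
  have hinr1Ψ : ∀ e, Sum.inr 1 ∉ Ψ e := by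
    intro e h
    by_cases hne : e = s(v, b)
    · subst hne
      rw [hΨb, hcutdef, Sym2.mem_iff] at h
      rcases h with h | h
      · exact Sum.inr_ne_inl h
      · simp at h
    · rw [hΨne e hne] at h; exact hinrF 1 e h
  have hinr2Ψ : ∀ e, Sum.inr 2 ∉ Ψ e := by
    intro e h
    by_cases hne : e = s(v, b)
    · subst hne
      rw [hΨb, hcutdef, Sym2.mem_iff] at h
      rcases h with h | h
      · exact Sum.inr_ne_inl h
      · simp at h
    · rw [hΨne e hne] at h; exact hinrF 2 e h
  have hinlΨ : ∀ (w : V) (e : Sym2 V), Sum.inl w ∈ Ψ e → w ∈ e := by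
    intro w e h
    by_cases hne : e = s(v, b)
    · subst hne
      rw [hΨb, hcutdef, Sym2.mem_iff] at h
      rcases h with h | h
      · obtain rfl : w = b := Sum.inl.inj h
        rw [Sym2.mem_iff]; exact Or.inr rfl
      · exact absurd h Sum.inl_ne_inr
    · rw [hΨne e hne] at h; exact (hmemF w e).1 h
  have hΨinj : Function.Injective Ψ := by
    intro e g h
    by_cases he : e = s(v, b) <;> by_cases hg : g = s(v, b)
    · rw [he, hg]
    · exfalso
      have : Sum.inr (0 : Fin 3) ∈ Ψ g := by
        rw [← h, he, hΨb, hcutdef, Sym2.mem_iff]; exact Or.inr rfl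
      exact hg (hinr0Ψ g this)
    · exfalso
      have : Sum.inr (0 : Fin 3) ∈ Ψ e := by
        rw [h, hg, hΨb, hcutdef, Sym2.mem_iff]; exact Or.inr rfl
      exact he (hinr0Ψ e this)
    · rw [hΨne e he, hΨne g hg] at h; exact hFinj h
  have hΨmem : ∀ e ∈ H.edgeSet, Ψ e ∈ H'.edgeSet := by
    intro e he
    by_cases hne : e = s(v, b)
    · subst hne; rw [hΨb]; exact hcutE'
    · rw [hΨne e hne, hE']; exact Or.inl ⟨e, ⟨he, hne⟩, rfl⟩
  have hΨcol : ∀ e ∈ H.edgeSet, phi' (Ψ e) = phi e := by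
    intro e he
    by_cases hne : e = s(v, b)
    · subst hne; rw [hΨb]; exact hcut
    · rw [hΨne e hne]; exact hold e ⟨he, hne⟩
  -- forward direction
  have forward : ∀ M : Set (Sym2 V), RainbowMatching H phi M →
      ∃ M', RainbowMatching H' phi' M' ∧ M'.ncard = M.ncard + 1 := by
    rintro M ⟨hsub, hdisj, hinj⟩
    -- pairwise disjointness of the transferred edges
    have himdisj : ∀ e ∈ M, ∀ f ∈ M, e ≠ f → ∀ x, x ∈ Ψ e → x ∉ Ψ f := by
      intro e he f hf hef x hx hx'
      rcases x with w | j
      · exact hdisj e he f hf hef w (hinlΨ w e hx) (hinlΨ w f hx')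
      · fin_cases j
        · exact hef ((hinr0Ψ e hx).trans (hinr0Ψ f hx').symm)
        · exact hinr1Ψ e hx
        · exact hinr2Ψ e hx
    set p : Sym2 (V ⊕ Fin 3) := if s(v, b) ∈ M then p1 else p2 with hp
    have hpE' : p ∈ H'.edgeSet := by
      rw [hp]; split
      · exact hp1E'
      · exact hp2E'
    have hpcol : phi' p = c₀ := by
      rw [hp]; split
      · exact hpend1
      · exact hpend2
    have hpdisj : ∀ e ∈ M, ∀ x, x ∈ p → x ∉ Ψ e := by
      intro e he x hx hx'
      rw [hp] at hx
      split at hx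
      -- p = p1, s(v,b) ∈ M
      · rw [hp1def, Sym2.mem_iff] at hx
        rcases hx with rfl | rfl
        · have hve : v ∈ e := hinlΨ v e hx'
          by_cases hne : e = s(v, b)
          · subst hne
            rw [hΨb, hcutdef, Sym2.mem_iff] at hx'
            rcases hx' with h | h
            · exact hvnb (Sum.inl.inj h)
            · exact Sum.inl_ne_inr h
          · rcases hatv e (hsub he) hve with rfl | rfl
            · exact hdisj _ he _ ‹s(v, b) ∈ M› hea_ne_eb v
                (by rw [Sym2.mem_iff]; left; rfl) (by rw [Sym2.mem_iff]; left; rfl)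
            · exact hne rfl
        · exact hinr1Ψ e hx'
      -- p = p2, s(v,b) ∉ M
      · rw [hp2def, Sym2.mem_iff] at hx
        rcases hx with rfl | rfl
        · exact ‹s(v, b) ∉ M› (hinr0Ψ e hx' ▸ he)
        · exact hinr2Ψ e hx'
    have hpnotmem : p ∉ Ψ '' M := by
      rintro ⟨e, he, hpe⟩
      rw [hp] at hpe
      split at hpe
      · exact hinr1Ψ e (hpe ▸ (by rw [hp1def, Sym2.mem_iff]; right; rfl))
      · exact hinr2Ψ e (hpe ▸ (by rw [hp2def, Sym2.mem_iff]; right; rfl))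
    refine ⟨insert p (Ψ '' M), ⟨?_, ?_, ?_⟩, ?_⟩
    · rintro e' (rfl | ⟨e, he, rfl⟩)
      · exact hpE'
      · exact hΨmem e (hsub he)
    · rintro e' (rfl | ⟨e, he, rfl⟩) f' (rfl | ⟨f, hf, rfl⟩) hne x hx
      · exact absurd rfl hne
      · exact hpdisj f hf x hx
      · intro hx'
        exact hpdisj e he x hx' hx
      · exact himdisj e he f hf (fun h => hne (by rw [h])) x hx
    · rintro e' (rfl | ⟨e, he, rfl⟩) f' (rfl | ⟨f, hf, rfl⟩) hcol
      · rfl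
      · exact absurd (((hΨcol f (hsub hf)).symm.trans hcol.symm).trans hpcol)
          (hfresh f (hsub hf))
      · exact absurd (((hΨcol e (hsub he)).symm.trans hcol).trans hpcol)
          (hfresh e (hsub he))
      · have : phi e = phi f := by
          rw [← hΨcol e (hsub he), ← hΨcol f (hsub hf)]; exact hcol
        rw [hinj he hf this]
    · rw [Set.ncard_insert_of_notMem hpnotmem (Set.toFinite _),
        Set.ncard_image_of_injective M hΨinj]
  -- backward direction
  have backward : ∀ M' : Set (Sym2 (V ⊕ Fin 3)), RainbowMatching H' phi' M' →
      ∃ M, RainbowMatching H phi M ∧ M'.ncard ≤ M.ncard + 1 := by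
    rintro M' ⟨hsub', hdisj', hinj'⟩
    -- main construction from a cleaned-up subset
    have main : ∀ M'' ⊆ M', p1 ∉ M'' → p2 ∉ M'' →
        ¬(cut ∈ M'' ∧ F s(v, a) ∈ M'') →
        ∃ M, RainbowMatching H phi M ∧ M.ncard = M''.ncard := by
      intro M'' hsub'' hnp1 hnp2 hnboth
      refine ⟨Ψ ⁻¹' M'', ⟨?_, ?_, ?_⟩, ?_⟩
      · -- subset of H.edgeSet
        intro e he
        simp only [Set.mem_preimage] at he
        by_cases hne : e = s(v, b)
        · subst hne; exact hvb
        · have hmem : Ψ e ∈ H'.edgeSet := hsub' (hsub'' he)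
          rw [hE'] at hmem
          rw [hΨne e hne] at he hmem
          rcases hmem with ⟨e₂, ⟨he₂, -⟩, heq⟩ | h
          · rwa [← hFinj heq]
          · exfalso
            rcases h with h | h | h
            · exact hinrF 0 e (h ▸ (by rw [hcutdef, Sym2.mem_iff]; right; rfl))
            · exact hinrF 1 e (h ▸ (by rw [hp1def, Sym2.mem_iff]; right; rfl))
            · exact hinrF 2 e (h ▸ (by rw [hp2def, Sym2.mem_iff]; right; rfl))
      · -- matching condition
        intro e he f hf hef w hwe hwf
        simp only [Set.mem_preimage] at he hf
        have hΨef : Ψ e ≠ Ψ f := fun h => hef (hΨinj h)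
        have heE : e ∈ H.edgeSet := by
          by_cases hne : e = s(v, b)
          · subst hne; exact hvb
          · have hmem : Ψ e ∈ H'.edgeSet := hsub' (hsub'' he)
            rw [hE'] at hmem
            rw [hΨne e hne] at hmem
            rcases hmem with ⟨e₂, ⟨he₂, -⟩, heq⟩ | h
            · rwa [← hFinj heq]
            · exfalso
              rcases h with h | h | h
              · exact hinrF 0 e (h ▸ (by rw [hcutdef, Sym2.mem_iff]; right; rfl))
              · exact hinrF 1 e (h ▸ (by rw [hp1def, Sym2.mem_iff]; right; rfl))
              · exact hinrF 2 e (h ▸ (by rw [hp2def, Sym2.mem_iff]; right; rfl))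
        have hfE : f ∈ H.edgeSet := by
          by_cases hne : f = s(v, b)
          · subst hne; exact hvb
          · have hmem : Ψ f ∈ H'.edgeSet := hsub' (hsub'' hf)
            rw [hE'] at hmem
            rw [hΨne f hne] at hmem
            rcases hmem with ⟨e₂, ⟨he₂, -⟩, heq⟩ | h
            · rwa [← hFinj heq]
            · exfalso
              rcases h with h | h | h
              · exact hinrF 0 f (h ▸ (by rw [hcutdef, Sym2.mem_iff]; right; rfl))
              · exact hinrF 1 f (h ▸ (by rw [hp1def, Sym2.mem_iff]; right; rfl))
              · exact hinrF 2 f (h ▸ (by rw [hp2def, Sym2.mem_iff]; right; rfl))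
        -- transfer the common vertex or derive a contradiction
        have key : ∀ e₁ ∈ M'', ∀ f₁ ∈ M'', ∀ g₁ g₂ : Sym2 V,
            Ψ g₁ = e₁ → Ψ g₂ = f₁ → g₁ = s(v, b) → g₂ ≠ s(v, b) → g₂ ∈ H.edgeSet →
            e₁ ≠ f₁ → ∀ u, u ∈ g₁ → u ∈ g₂ → False := by
          rintro e₁ he₁ f₁ hf₁ g₁ g₂ rfl rfl rfl hg₂ hg₂E hne u hu1 hu2
          rw [Sym2.mem_iff] at hu1
          rcases hu1 with rfl | rfl
          · -- common vertex is v
            rcases hatv g₂ hg₂E hu2 with rfl | rfl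
            · exact hnboth ⟨hΨb ▸ he₁, hΨne _ hg₂ ▸ hf₁⟩
            · exact hg₂ rfl
          · -- common vertex is b
            exact hdisj' _ (hsub'' he₁) _ (hsub'' hf₁) hne (Sum.inl u)
              (by rw [hΨb, hcutdef, Sym2.mem_iff]; left; rfl)
              (by rw [hΨne _ hg₂]; exact (hmemF u g₂).2 hu2)
        by_cases hne : e = s(v, b) <;> by_cases hnf : f = s(v, b)
        · exact hef (hne.trans hnf.symm)
        · exact key (Ψ e) he (Ψ f) hf e f rfl rfl hne hnf hfE hΨef w hwe hwf
        · exact key (Ψ f) hf (Ψ e) he f e rfl rfl hnf hne heE hΨef.symm w hwf hwe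
        · exact hdisj' _ (hsub'' he) _ (hsub'' hf) hΨef (Sum.inl w)
            (by rw [hΨne e hne]; exact (hmemF w e).2 hwe)
            (by rw [hΨne f hnf]; exact (hmemF w f).2 hwf)
      · -- injectivity of colors
        intro e he f hf hcol
        simp only [Set.mem_preimage] at he hf
        have heE : e ∈ H.edgeSet := by
          by_cases hne : e = s(v, b)
          · subst hne; exact hvb
          · have hmem : Ψ e ∈ H'.edgeSet := hsub' (hsub'' he)
            rw [hE'] at hmem
            rw [hΨne e hne] at hmem
            rcases hmem with ⟨e₂, ⟨he₂, -⟩, heq⟩ | h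
            · rwa [← hFinj heq]
            · exfalso
              rcases h with h | h | h
              · exact hinrF 0 e (h ▸ (by rw [hcutdef, Sym2.mem_iff]; right; rfl))
              · exact hinrF 1 e (h ▸ (by rw [hp1def, Sym2.mem_iff]; right; rfl))
              · exact hinrF 2 e (h ▸ (by rw [hp2def, Sym2.mem_iff]; right; rfl))
        have hfE : f ∈ H.edgeSet := by
          by_cases hne : f = s(v, b)
          · subst hne; exact hvb
          · have hmem : Ψ f ∈ H'.edgeSet := hsub' (hsub'' hf)
            rw [hE'] at hmem
            rw [hΨne f hne] at hmem
            rcases hmem with ⟨e₂, ⟨he₂, -⟩, heq⟩ | h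
            · rwa [← hFinj heq]
            · exfalso
              rcases h with h | h | h
              · exact hinrF 0 f (h ▸ (by rw [hcutdef, Sym2.mem_iff]; right; rfl))
              · exact hinrF 1 f (h ▸ (by rw [hp1def, Sym2.mem_iff]; right; rfl))
              · exact hinrF 2 f (h ▸ (by rw [hp2def, Sym2.mem_iff]; right; rfl))
        have : phi' (Ψ e) = phi' (Ψ f) := by
          rw [hΨcol e heE, hΨcol f hfE]; exact hcol
        exact hΨinj (hinj' (hsub'' he) (hsub'' hf) this)
      · -- cardinality
        have himg : Ψ '' (Ψ ⁻¹' M'') = M'' := by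
          apply Set.Subset.antisymm (Set.image_preimage_subset Ψ M'')
          intro e' he'
          have hmem : e' ∈ H'.edgeSet := hsub' (hsub'' he')
          rw [hE'] at hmem
          rcases hmem with ⟨e, ⟨heE, hne⟩, rfl⟩ | h
          · exact ⟨e, by simpa [Set.mem_preimage, hΨne e hne] using he', hΨne e hne⟩
          · rcases h with h | h | h
            · subst h
              exact ⟨s(v, b), by simpa [Set.mem_preimage, hΨb] using he', hΨb⟩
            · exact absurd (h ▸ he') hnp1
            · exact absurd (h ▸ he') hnp2
        calc (Ψ ⁻¹' M'').ncard = (Ψ '' (Ψ ⁻¹' M'')).ncard :=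
              (Set.ncard_image_of_injective _ hΨinj).symm
          _ = M''.ncard := by rw [himg]
    -- choose what to delete
    by_cases hboth : cut ∈ M' ∧ F s(v, a) ∈ M'
    · -- delete the copy of s(v,a)
      have hnp1 : p1 ∉ M' := by
        intro hp1m
        refine hdisj' p1 hp1m _ hboth.2 ?_ (Sum.inl v)
          (by rw [hp1def, Sym2.mem_iff]; left; rfl) ((hmemF v _).2 ?_)
        · intro h
          exact hinrF 1 s(v, a) (h ▸ (by rw [hp1def, Sym2.mem_iff]; right; rfl))
        · rw [Sym2.mem_iff]; left; rfl
      have hnp2 : p2 ∉ M' := by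
        intro hp2m
        refine hdisj' p2 hp2m cut hboth.1 ?_ (Sum.inr 0)
          (by rw [hp2def, Sym2.mem_iff]; left; rfl)
          (by rw [hcutdef, Sym2.mem_iff]; right; rfl)
        intro h
        have h2 : Sum.inr (2 : Fin 3) ∈ cut :=
          h ▸ (by rw [hp2def, Sym2.mem_iff]; right; rfl)
        rw [hcutdef, Sym2.mem_iff] at h2
        rcases h2 with h2 | h2
        · exact Sum.inr_ne_inl h2
        · exact absurd (Sum.inr.inj h2) (by decide)
      obtain ⟨M, hM, hcard⟩ := main (M' \ {F s(v, a)})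
        Set.diff_subset (fun h => hnp1 h.1) (fun h => hnp2 h.1)
        (fun h => h.2.2 rfl)
      refine ⟨M, hM, ?_⟩
      rw [hcard]
      have := Set.ncard_diff_singleton_add_one hboth.2 (Set.toFinite M')
      omega
    · -- delete the pendant edge present (if any); at most one can be present
      have hpend : ¬(p1 ∈ M' ∧ p2 ∈ M') := by
        rintro ⟨h1, h2⟩
        exact hp1np2 (hinj' h1 h2 (hpend1.trans hpend2.symm))
      by_cases hm1 : p1 ∈ M'
      · obtain ⟨M, hM, hcard⟩ := main (M' \ {p1}) Set.diff_subset
          (fun h => h.2 rfl) (fun h => hpend ⟨hm1, h.1⟩)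
          (fun h => hboth ⟨h.1.1, h.2.1⟩)
        refine ⟨M, hM, ?_⟩
        rw [hcard]
        have := Set.ncard_diff_singleton_add_one hm1 (Set.toFinite M')
        omega
      · by_cases hm2 : p2 ∈ M'
        · obtain ⟨M, hM, hcard⟩ := main (M' \ {p2}) Set.diff_subset
            (fun h => hm1 h.1) (fun h => h.2 rfl)
            (fun h => hboth ⟨h.1.1, h.2.1⟩)
          refine ⟨M, hM, ?_⟩
          rw [hcard]
          have := Set.ncard_diff_singleton_add_one hm2 (Set.toFinite M')
          omega
        · obtain ⟨M, hM, hcard⟩ := main M' (subset_refl _) hm1 hm2 hboth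
          exact ⟨M, hM, by omega⟩
  -- conclude via sSup
  have hzero : ∀ (W : Type _) (G : SimpleGraph W) (ψ : Sym2 W → C),
      RainbowMatching G ψ (∅ : Set (Sym2 W)) := by
    intro W G ψ
    exact ⟨Set.empty_subset _, fun e he => absurd he (Set.notMem_empty e),
      Set.injOn_empty ψ⟩
  have hbddS : BddAbove {n : ℕ | ∃ M, RainbowMatching H phi M ∧ M.ncard = n} := by
    refine ⟨(Set.univ : Set (Sym2 V)).ncard, ?_⟩
    rintro n ⟨M, -, rfl⟩
    exact Set.ncard_le_ncard (Set.subset_univ M) Set.finite_univ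
  have hbddS' : BddAbove {n : ℕ | ∃ M, RainbowMatching H' phi' M ∧ M.ncard = n} := by
    refine ⟨(Set.univ : Set (Sym2 (V ⊕ Fin 3))).ncard, ?_⟩
    rintro n ⟨M, -, rfl⟩
    exact Set.ncard_le_ncard (Set.subset_univ M) Set.finite_univ
  have hneS : {n : ℕ | ∃ M, RainbowMatching H phi M ∧ M.ncard = n}.Nonempty :=
    ⟨0, ∅, hzero V H phi, by simp⟩
  have hneS' : {n : ℕ | ∃ M, RainbowMatching H' phi' M ∧ M.ncard = n}.Nonempty :=
    ⟨0, ∅, hzero (V ⊕ Fin 3) H' phi', by simp⟩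
  apply le_antisymm
  · -- ≤
    obtain ⟨M₀', hM₀', hc'⟩ := Nat.sSup_mem hneS' hbddS'
    obtain ⟨M, hM, hle⟩ := backward M₀' hM₀'
    have hmem : M.ncard ∈ {n : ℕ | ∃ N, RainbowMatching H phi N ∧ N.ncard = n} :=
      ⟨M, hM, rfl⟩
    have h1 : M.ncard ≤ maxRainbow H phi := le_csSup hbddS hmem
    have h2 : maxRainbow H' phi' = M₀'.ncard := hc'.symm
    omega
  · -- ≥
    obtain ⟨M₀, hM₀, hc⟩ := Nat.sSup_mem hneS hbddS
    obtain ⟨M', hM', hc'⟩ := forward M₀ hM₀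
    have hmem : M'.ncard ∈ {n : ℕ | ∃ N, RainbowMatching H' phi' N ∧ N.ncard = n} :=
      ⟨M', hM', rfl⟩
    have h1 : M'.ncard ≤ maxRainbow H' phi' := le_csSup hbddS' hmem
    have h2 : maxRainbow H phi = M₀.ncard := hc.symm
    omega
end

section
/- Let H be a properly edge-colored triangle-free 2-regular graph. Construct the linear forest L whose components are paths with 3 edges, one for each edge vw of H, where the path corresponding to vw has its three edges colored v, φ(vw), w in order (each vertex of H serving as a new color). Then the maximum rainbow matching size of L equals the maximum rainbow matching size of H plus |E(H)|. -/
open SimpleGraph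

/-- An edge coloring is proper if distinct edges sharing an endpoint get distinct colors. -/
def ProperColoring {V C : Type*} (G : SimpleGraph V) (phi : Sym2 V → C) : Prop :=
  ∀ e ∈ G.edgeSet, ∀ f ∈ G.edgeSet, e ≠ f →
    (∃ v, v ∈ e ∧ v ∈ f) → phi e ≠ phi f

open Equiv

lemma rainbow_empty {V C : Type*} (G : SimpleGraph V) (phi : Sym2 V → C) :
    RainbowMatching G phi ∅ :=
  ⟨Set.empty_subset _, fun e he => absurd he (Set.notMem_empty e), fun x hx => absurd hx (Set.notMem_empty x)⟩

lemma maxRainbow_bddAbove {V C : Type*} [Finite V] (G : SimpleGraph V) (phi : Sym2 V → C) :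
    BddAbove {n : ℕ | ∃ M, RainbowMatching G phi M ∧ M.ncard = n} := by
  refine ⟨Nat.card (Sym2 V), ?_⟩
  rintro n ⟨M, _, rfl⟩
  calc M.ncard ≤ (Set.univ : Set (Sym2 V)).ncard :=
        Set.ncard_le_ncard (Set.subset_univ M) (Set.toFinite _)
    _ = Nat.card (Sym2 V) := Set.ncard_univ _

lemma exists_maxRainbow {V C : Type*} [Finite V] (G : SimpleGraph V) (phi : Sym2 V → C) :
    ∃ M, RainbowMatching G phi M ∧ M.ncard = maxRainbow G phi := by
  have h := Nat.sSup_mem (s := {n : ℕ | ∃ M, RainbowMatching G phi M ∧ M.ncard = n})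
    ⟨0, ∅, rainbow_empty G phi, Set.ncard_empty _⟩ (maxRainbow_bddAbove G phi)
  exact h

lemma ncard_le_maxRainbow {V C : Type*} [Finite V] {G : SimpleGraph V} {phi : Sym2 V → C}
    {M : Set (Sym2 V)} (hM : RainbowMatching G phi M) : M.ncard ≤ maxRainbow G phi :=
  le_csSup (maxRainbow_bddAbove G phi) ⟨M, hM, rfl⟩



/-- For a fixed-point-free involution, one can select one element from each orbit pair. -/
lemma exists_selector {α : Type*} (f : α → α) (hinv : Function.Involutive f)
    (hfpf : ∀ a, f a ≠ a) : ∃ S : Set α, ∀ a, (a ∈ S ↔ f a ∉ S) := by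
  classical
  let r : α → α → Prop := fun a b => b = a ∨ b = f a
  have hequiv : Equivalence r := by
    constructor
    · exact fun a => Or.inl rfl
    · rintro a b (rfl | rfl)
      · exact Or.inl rfl
      · exact Or.inr (hinv a).symm
    · rintro a b c (rfl | rfl) (rfl | rfl)
      · exact Or.inl rfl
      · exact Or.inr rfl
      · exact Or.inr rfl
      · exact Or.inl (hinv a)
  let st : Setoid α := ⟨r, hequiv⟩
  refine ⟨{a | (Quotient.mk st a).out = a}, fun a => ?_⟩
  have h1 : Quotient.mk st (f a) = Quotient.mk st a := Quotient.sound (Or.inr (hinv a).symm)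
  have h2 : r (Quotient.mk st a).out a := (Quotient.mk_out (s := st) a)
  simp only [Set.mem_setOf_eq, h1]
  rcases h2 with h | h
  · -- a = out
    have hout : (Quotient.mk st a).out = a := h.symm
    rw [hout]
    constructor
    · intro _ hfa; exact hfpf a hfa.symm
    · intro _; rfl
  · -- a = f out, so out = f a
    have hout : (Quotient.mk st a).out = f a := by
      have := congrArg f h
      rw [hinv] at this
      exact this.symm
    rw [hout]
    constructor
    · intro ha; exact absurd ha.symm (Ne.symm (hfpf a))
    · intro hfa; exact absurd rfl hfa

/-- 2-regular orientation -/
lemma exists_succ_fn {V : Type*} (H : SimpleGraph V)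
    (hreg : ∀ v : V, (H.neighborSet v).ncard = 2) :
    ∃ s : V → V, (∀ v, H.Adj v (s v)) ∧ (∀ v, s (s v) ≠ v) ∧ Function.Injective s ∧
      (∀ a b, H.Adj a b → s a = b ∨ s b = a) := by
  classical
  -- two named neighbors of each vertex
  have h2 : ∀ v, ∃ a b : V, a ≠ b ∧ H.neighborSet v = {a, b} := by
    intro v; exact Set.ncard_eq_two.mp (hreg v)
  choose nb1 nb2 hne hNB using h2
  -- the "other neighbor" function
  let oth : V → V → V := fun v w => if w = nb1 v then nb2 v else nb1 v
  have hoth_mem : ∀ v w, H.Adj v w → H.Adj v (oth v w) := by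
    intro v w _
    show H.Adj v (if w = nb1 v then nb2 v else nb1 v)
    split
    · have : nb2 v ∈ H.neighborSet v := by rw [hNB v]; right; rfl
      exact this
    · have : nb1 v ∈ H.neighborSet v := by rw [hNB v]; left; rfl
      exact this
  have hadj_cases : ∀ v w, H.Adj v w → w = nb1 v ∨ w = nb2 v := by
    intro v w h
    have : w ∈ H.neighborSet v := h
    rw [hNB v] at this
    exact this
  have hoth_ne : ∀ v w, H.Adj v w → oth v w ≠ w := by
    intro v w h
    show (if w = nb1 v then nb2 v else nb1 v) ≠ w
    split
    · rename_i hw; rw [hw]; exact (hne v).symm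
    · rename_i hw; exact fun hc => hw hc.symm
  have hoth_uniq : ∀ v w x, H.Adj v w → H.Adj v x → x ≠ w → x = oth v w := by
    intro v w x hw hx hne2
    rcases hadj_cases v w hw with rfl | rfl <;> rcases hadj_cases v x hx with rfl | rfl
    · exact absurd rfl hne2
    · simp only [oth, if_pos rfl]
    · simp only [oth, if_neg (Ne.symm (hne v))]
    · exact absurd rfl hne2
  have hoth_oth : ∀ v w, H.Adj v w → oth v (oth v w) = w := by
    intro v w h
    exact (hoth_uniq v (oth v w) w (hoth_mem v w h) h (Ne.symm (hoth_ne v w h))).symm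
  -- dart machinery
  let rot : H.Dart → H.Dart := fun d => ⟨(d.toProd.1, oth d.toProd.1 d.toProd.2), hoth_mem _ _ d.adj⟩
  have hrot_inv : Function.Involutive rot := by
    intro d
    apply SimpleGraph.Dart.ext
    show (d.toProd.1, oth d.toProd.1 (oth d.toProd.1 d.toProd.2)) = d.toProd
    rw [hoth_oth _ _ d.adj]
  have hrev_inv : Function.Involutive (SimpleGraph.Dart.symm (G := H)) := fun d => d.symm_symm
  let rotP : Perm H.Dart := hrot_inv.toPerm
  let revP : Perm H.Dart := hrev_inv.toPerm
  let σ : Perm H.Dart := rotP * revP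
  have hrotP : ∀ d, rotP d = rot d := fun d => rfl
  have hrevP : ∀ d, revP d = d.symm := fun d => rfl
  have hσ : ∀ d, σ d = rot d.symm := fun d => rfl
  have hrotP2 : rotP * rotP = 1 := Equiv.ext fun d => hrot_inv d
  have hrevP2 : revP * revP = 1 := Equiv.ext fun d => hrev_inv d
  have hrev_cancel : ∀ x : Perm H.Dart, revP * (revP * x) = x := by
    intro x; rw [← mul_assoc, hrevP2, one_mul]
  have hσrev : σ * (revP * σ * revP) = 1 := by
    show rotP * revP * (revP * (rotP * revP) * revP) = 1
    simp only [mul_assoc, hrev_cancel]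
    simp only [hrevP2, mul_one, hrotP2]
  have hconj : revP * σ * revP = σ⁻¹ := by
    rw [← mul_assoc] at hσrev ⊢
    exact eq_inv_of_mul_eq_one_right hσrev
  have hrevinv : revP⁻¹ = revP := by
    apply inv_eq_of_mul_eq_one_right hrevP2
  have hconjz : ∀ k : ℤ, revP * σ ^ k * revP = σ ^ (-k) := by
    intro k
    have h1 : (MulAut.conj revP) (σ ^ k) = ((MulAut.conj revP) σ) ^ k := map_zpow _ _ _
    have h2 : (MulAut.conj revP) σ = σ⁻¹ := by
      show revP * σ * revP⁻¹ = σ⁻¹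
      rw [hrevinv]; exact hconj
    have h3 : (MulAut.conj revP) (σ ^ k) = revP * σ ^ k * revP⁻¹ := rfl
    rw [h3, hrevinv] at h1
    rw [h1, h2, inv_zpow, zpow_neg]
  have hswap : ∀ k : ℤ, σ ^ (-k) * revP = revP * σ ^ k := by
    intro k
    rw [← hconjz k, mul_assoc, hrevP2, mul_one]
  have happ : ∀ (a b : ℤ) (d : H.Dart), (σ^a) ((σ^b) d) = (σ^(a+b)) d := by
    intro a b d; rw [zpow_add]; rfl
  have hrev_app : ∀ (i : ℤ) (d : H.Dart), ((σ ^ i) d).symm = (σ ^ (-i)) d.symm := by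
    intro i d
    have h := congrFun (congrArg (fun p : Perm H.Dart => (p : H.Dart → H.Dart)) (hswap i)) d
    exact (h.symm : _)
  -- key: a dart is never in the same cycle as its reverse
  have hkey : ∀ d : H.Dart, ¬ σ.SameCycle d d.symm := by
    rintro d ⟨k, hk⟩
    rcases Int.even_or_odd k with ⟨mm, hm⟩ | ⟨mm, hm⟩
    · set e := (σ ^ mm) d with he
      have : e.symm = e := by
        calc e.symm = ((σ ^ mm) d).symm := rfl
        _ = (σ ^ (-mm)) d.symm := hrev_app mm d
        _ = (σ ^ (-mm)) ((σ ^ k) d) := by rw [hk]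
        _ = (σ ^ (-mm + k)) d := happ _ _ _
        _ = e := by rw [hm]; ring_nf; exact he.symm
      exact Dart.symm_ne e this
    · set e := (σ ^ mm) d with he
      have h1 : e.symm = σ e := by
        calc e.symm = (σ ^ (-mm)) d.symm := hrev_app mm d
        _ = (σ ^ (-mm)) ((σ ^ k) d) := by rw [hk]
        _ = (σ ^ (-mm + k)) d := happ _ _ _
        _ = (σ ^ ((1:ℤ) + mm)) d := by rw [hm]; ring_nf
        _ = (σ ^ (1:ℤ)) ((σ ^ mm) d) := (happ _ _ _).symm
        _ = σ e := by rw [zpow_one]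
      have h2 : σ e = rot e.symm := hσ e
      rw [h1] at h2
      -- σ e is a fixed point of rot
      have : (rot (σ e)).toProd.2 = (σ e).toProd.2 := by rw [← h2]
      exact hoth_ne _ _ (σ e).adj this
  -- quotient by cycles
  let stc : Setoid H.Dart := ⟨σ.SameCycle, ⟨Perm.SameCycle.refl σ, Perm.SameCycle.symm, Perm.SameCycle.trans⟩⟩
  have hwd : ∀ d e : H.Dart, σ.SameCycle d e → σ.SameCycle d.symm e.symm := by
    rintro d e ⟨i, hi⟩
    exact ⟨-i, by rw [← hrev_app, hi]⟩
  let rbar : Quotient stc → Quotient stc :=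
    Quotient.map Dart.symm (fun d e h => hwd d e h)
  have hrbar_mk : ∀ d : H.Dart, rbar (Quotient.mk stc d) = Quotient.mk stc d.symm :=
    fun d => Quotient.map_mk _ _ d
  have hrbar_inv : Function.Involutive rbar := by
    intro q
    induction q using Quotient.ind with
    | _ d => rw [hrbar_mk, hrbar_mk, d.symm_symm]
  have hrbar_fpf : ∀ q, rbar q ≠ q := by
    intro q
    induction q using Quotient.ind with
    | _ d =>
      rw [hrbar_mk]
      intro hq
      exact hkey d (Quotient.exact hq).symm
  obtain ⟨S, hS⟩ := exists_selector rbar hrbar_inv hrbar_fpf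
  let O : Set H.Dart := {d | Quotient.mk stc d ∈ S}
  have hO_symm : ∀ d : H.Dart, d ∈ O ↔ d.symm ∉ O := by
    intro d
    have := hS (Quotient.mk stc d)
    rw [hrbar_mk] at this
    exact this
  have hO_mk : ∀ d e : H.Dart, σ.SameCycle d e → (d ∈ O ↔ e ∈ O) := by
    intro d e h
    have : Quotient.mk stc d = Quotient.mk stc e := Quotient.sound h
    simp only [O, Set.mem_setOf_eq, this]
  have hO_σ : ∀ d : H.Dart, σ d ∈ O ↔ d ∈ O := by
    intro d
    exact (hO_mk (σ d) d ⟨-1, by simp⟩)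
  -- adjacency to named neighbor
  have hadj1 : ∀ v, H.Adj v (nb1 v) := by
    intro v
    have : nb1 v ∈ H.neighborSet v := by rw [hNB v]; left; rfl
    exact this
  have hσ_symm_rot : ∀ d : H.Dart, σ d.symm = rot d := by
    intro d; rw [hσ, d.symm_symm]
  -- existence of out-dart in O
  have hout : ∀ v : V, ∃ d : H.Dart, d ∈ O ∧ d.toProd.1 = v := by
    intro v
    by_cases h : (⟨(v, nb1 v), hadj1 v⟩ : H.Dart) ∈ O
    · exact ⟨_, h, rfl⟩
    · have h2 : (⟨(v, nb1 v), hadj1 v⟩ : H.Dart).symm ∈ O := by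
        by_contra hc
        exact h ((hO_symm _).mpr hc)
      refine ⟨σ (⟨(v, nb1 v), hadj1 v⟩ : H.Dart).symm, (hO_σ _).mpr h2, ?_⟩
      rw [hσ_symm_rot]
  -- uniqueness of out-dart in O
  have huniq : ∀ d d' : H.Dart, d ∈ O → d' ∈ O → d.toProd.1 = d'.toProd.1 → d = d' := by
    intro d d' hd hd' hfst
    by_contra hne2
    have hsnd : d'.toProd.2 ≠ d.toProd.2 := by
      intro hc
      exact hne2 (Dart.ext _ _ (Prod.ext hfst hc.symm))
    have hd'2 : d'.toProd.2 = oth d.toProd.1 d.toProd.2 := by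
      apply hoth_uniq d.toProd.1 d.toProd.2 d'.toProd.2 d.adj _ hsnd
      rw [hfst]; exact d'.adj
    have hd'rot : d' = rot d := Dart.ext _ _ (Prod.ext hfst.symm hd'2)
    have h3 : σ d.symm ∉ O := by
      rw [hO_σ]
      exact (hO_symm d).mp hd
    rw [hσ_symm_rot] at h3
    rw [hd'rot] at hd'
    exact h3 hd'
  -- definition of s
  have hsel : ∀ v : V, ∃ d : H.Dart, d ∈ O ∧ d.toProd.1 = v := hout
  choose sd hsdO hsdfst using hsel
  refine ⟨fun v => (sd v).toProd.2, ?_, ?_, ?_, ?_⟩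
  case _ =>
    intro v
    have := (sd v).adj
    rw [hsdfst v] at this
    exact this
  case _ =>
    -- s (s v) ≠ v
    intro v hc
    simp only at hc
    have hx : σ (sd v) ∈ O := (hO_σ _).mpr (hsdO v)
    have hxfst : (σ (sd v)).toProd.1 = (sd v).toProd.2 := by
      rw [hσ]; rfl
    have hxeq : σ (sd v) = sd ((sd v).toProd.2) := by
      apply huniq _ _ hx (hsdO _)
      rw [hxfst, hsdfst]
    have hsnd : (sd ((sd v).toProd.2)).toProd.2 = oth (sd v).toProd.2 (sd v).toProd.1 := by
      rw [← hxeq, hσ]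
      show oth (sd v).symm.toProd.1 (sd v).symm.toProd.2 = _
      rfl
    rw [hsnd, hsdfst] at hc
    have hadjvs : H.Adj ((sd v).toProd.2) v := by
      have := (sd v).adj
      rw [hsdfst v] at this
      exact this.symm
    exact hoth_ne _ _ hadjvs hc
  case _ =>
    -- injective
    intro v1 v2 heq
    simp only at heq
    have h1 : σ (sd v1) ∈ O := (hO_σ _).mpr (hsdO v1)
    have h2 : σ (sd v2) ∈ O := (hO_σ _).mpr (hsdO v2)
    have hfst12 : (σ (sd v1)).toProd.1 = (σ (sd v2)).toProd.1 := by
      rw [hσ, hσ]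
      show (sd v1).symm.toProd.1 = (sd v2).symm.toProd.1
      show (sd v1).toProd.2 = (sd v2).toProd.2
      exact heq
    have huq := huniq _ _ h1 h2 hfst12
    have hsnd12 : (σ (sd v1)).toProd.2 = (σ (sd v2)).toProd.2 := by rw [huq]
    rw [hσ, hσ] at hsnd12
    have hsnd12' : oth ((sd v1).toProd.2) ((sd v1).toProd.1) = oth ((sd v2).toProd.2) ((sd v2).toProd.1) := hsnd12
    have hadj1' : H.Adj ((sd v1).toProd.2) ((sd v1).toProd.1) := (sd v1).adj.symm
    have hadj2' : H.Adj ((sd v2).toProd.2) ((sd v2).toProd.1) := (sd v2).adj.symm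
    have := congrArg (fun x => oth ((sd v1).toProd.2) x) hsnd12'
    rw [hoth_oth _ _ hadj1'] at this
    rw [heq] at this
    rw [hoth_oth _ _ hadj2'] at this
    rw [← hsdfst v1, ← hsdfst v2, this]
  case _ =>
    -- edge coverage
    intro a b hab
    by_cases h : (⟨(a, b), hab⟩ : H.Dart) ∈ O
    · left
      have := huniq _ _ h (hsdO a) (hsdfst a).symm
      have h2 := congrArg (fun d : H.Dart => d.toProd.2) this
      exact h2.symm
    · right
      have h2 : (⟨(a, b), hab⟩ : H.Dart).symm ∈ O := by
        by_contra hc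
        exact h ((hO_symm _).mpr hc)
      have := huniq _ _ h2 (hsdO b) (hsdfst b).symm
      have h3 := congrArg (fun d : H.Dart => d.toProd.2) this
      exact h3.symm

lemma at_most_two_edges {V : Type*} {H : SimpleGraph V}
    (hreg : ∀ v : V, (H.neighborSet v).ncard = 2) {v : V} {f1 f2 f3 : Sym2 V}
    (h1 : f1 ∈ H.edgeSet) (h2 : f2 ∈ H.edgeSet) (h3 : f3 ∈ H.edgeSet)
    (hv1 : v ∈ f1) (hv2 : v ∈ f2) (hv3 : v ∈ f3)
    (h12 : f1 ≠ f2) (h13 : f1 ≠ f3) (h23 : f2 ≠ f3) : False := by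
  classical
  obtain ⟨w1, rfl⟩ := Sym2.mem_iff_exists.mp hv1
  obtain ⟨w2, rfl⟩ := Sym2.mem_iff_exists.mp hv2
  obtain ⟨w3, rfl⟩ := Sym2.mem_iff_exists.mp hv3
  have hw1 : w1 ∈ H.neighborSet v := h1
  have hw2 : w2 ∈ H.neighborSet v := h2
  have hw3 : w3 ∈ H.neighborSet v := h3
  have hne12 : w1 ≠ w2 := fun h => h12 (by rw [h])
  have hne13 : w1 ≠ w3 := fun h => h13 (by rw [h])
  have hne23 : w2 ≠ w3 := fun h => h23 (by rw [h])
  have hsub : {w1, w2, w3} ⊆ H.neighborSet v := by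
    intro x hx
    rcases hx with rfl | rfl | rfl
    · exact hw1
    · exact hw2
    · exact hw3
  have hcard : ({w1, w2, w3} : Set V).ncard = 3 := by
    rw [Set.ncard_insert_of_notMem (by simp [hne12, hne13]) (Set.toFinite _),
      Set.ncard_pair hne23]
  have hfin : (H.neighborSet v).Finite := by
    apply Set.finite_of_ncard_ne_zero
    rw [hreg v]; omega
  have := Set.ncard_le_ncard hsub hfin
  rw [hcard, hreg v] at this
  omega

lemma matching_of_low_degree {V : Type*} [Fintype V] {H : SimpleGraph V}
    (hreg : ∀ v : V, (H.neighborSet v).ncard = 2) :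
    ∀ (F : Set (Sym2 V)), F ⊆ H.edgeSet →
      ∃ P, P ⊆ F ∧ (∀ e ∈ P, ∀ f ∈ P, e ≠ f → ∀ v, v ∈ e → v ∉ f) ∧
        F.ncard ≤ P.ncard + {v | ∃ f1 ∈ F, ∃ f2 ∈ F, f1 ≠ f2 ∧ v ∈ f1 ∧ v ∈ f2}.ncard := by
  classical
  intro F
  generalize hn : F.ncard = n
  induction n using Nat.strong_induction_on generalizing F with
  | _ n IH =>
    intro hF
    by_cases hdis : ∀ e ∈ F, ∀ f ∈ F, e ≠ f → ∀ v, v ∈ e → v ∉ f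
    · exact ⟨F, subset_rfl, hdis, by omega⟩
    · push_neg at hdis
      obtain ⟨e, he, f, hf, hef, v, hv, hvf⟩ := hdis
      set F' := F \ {e} with hF'
      have hcard : F'.ncard + 1 = F.ncard :=
        Set.ncard_diff_singleton_add_one he (Set.toFinite _)
      have hlt : F'.ncard < n := by omega
      obtain ⟨P, hPF', hPdis, hineq⟩ := IH F'.ncard hlt F' rfl (fun x hx => hF hx.1)
      refine ⟨P, fun x hx => (hPF' hx).1, hPdis, ?_⟩
      have hmono : {v | ∃ f1 ∈ F', ∃ f2 ∈ F', f1 ≠ f2 ∧ v ∈ f1 ∧ v ∈ f2}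
          ⊂ {v | ∃ f1 ∈ F, ∃ f2 ∈ F, f1 ≠ f2 ∧ v ∈ f1 ∧ v ∈ f2} := by
        constructor
        · rintro x ⟨g1, hg1, g2, hg2, hne, hx1, hx2⟩
          exact ⟨g1, hg1.1, g2, hg2.1, hne, hx1, hx2⟩
        · intro hsub
          have hvA : v ∈ {v | ∃ f1 ∈ F, ∃ f2 ∈ F, f1 ≠ f2 ∧ v ∈ f1 ∧ v ∈ f2} :=
            ⟨e, he, f, hf, hef, hv, hvf⟩
          have hvA' := hsub hvA
          obtain ⟨g1, hg1, g2, hg2, hne, hx1, hx2⟩ := hvA'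
          exact at_most_two_edges hreg (hF hg1.1) (hF hg2.1) (hF he) hx1 hx2 hv hne
            (fun h => hg1.2 (by simp [h])) (fun h => hg2.2 (by simp [h]))
      have hA := Set.ncard_lt_ncard hmono (Set.toFinite _)
      omega

section PE
variable {V : Type*} (H : SimpleGraph V)

/-- the three edges of the path attached to edge `e`. -/
def pe (e : H.edgeSet) (i : Fin 3) : Sym2 (↥H.edgeSet × Fin 4) :=
  s((e, i.castSucc), (e, i.succ))

lemma pe0 (e : H.edgeSet) : pe H e 0 = s((e, (0:Fin 4)), (e, (1:Fin 4))) := rfl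
lemma pe1 (e : H.edgeSet) : pe H e 1 = s((e, (1:Fin 4)), (e, (2:Fin 4))) := rfl
lemma pe2 (e : H.edgeSet) : pe H e 2 = s((e, (2:Fin 4)), (e, (3:Fin 4))) := rfl

lemma pe_inj {e f : H.edgeSet} {i j : Fin 3} (h : pe H e i = pe H f j) :
    e = f ∧ i = j := by
  rcases Sym2.eq_iff.mp h with ⟨h1, h2⟩ | ⟨h1, h2⟩
  · obtain ⟨he, hi⟩ := Prod.ext_iff.mp h1
    exact ⟨he, Fin.castSucc_inj.mp hi⟩
  · obtain ⟨he, hi⟩ := Prod.ext_iff.mp h1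
    obtain ⟨-, hi2⟩ := Prod.ext_iff.mp h2
    exfalso
    have a1 : (i.castSucc : Fin 4).val = (j.succ : Fin 4).val := congrArg Fin.val hi
    have a2 : (i.succ : Fin 4).val = (j.castSucc : Fin 4).val := congrArg Fin.val hi2
    simp [Fin.val_succ] at a1 a2
    omega

lemma pe_fst {e : H.edgeSet} {i : Fin 3} {x : ↥H.edgeSet × Fin 4}
    (h : x ∈ pe H e i) : x.1 = e := by
  rcases Sym2.mem_iff.mp h with rfl | rfl <;> rfl

lemma pe_mem_iff {e : H.edgeSet} {i : Fin 3} {x : ↥H.edgeSet × Fin 4} :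
    x ∈ pe H e i ↔ x = (e, i.castSucc) ∨ x = (e, i.succ) := Sym2.mem_iff

end PE

lemma lower_aux {V C : Type*} [Fintype V] [DecidableEq V]
    (H : SimpleGraph V) (phi : Sym2 V → C)
    (hreg : ∀ v : V, (H.neighborSet v).ncard = 2)
    (fst snd : H.edgeSet → V)
    (hends : ∀ e : H.edgeSet, s(fst e, snd e) = (e : Sym2 V))
    (L : SimpleGraph (H.edgeSet × Fin 4))
    (hL : L = SimpleGraph.fromEdgeSet
      {p | ∃ (e : H.edgeSet) (i : Fin 3), p = s((e, i.castSucc), (e, i.succ))})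
    (phiL : Sym2 (H.edgeSet × Fin 4) → V ⊕ C)
    (h0 : ∀ e : H.edgeSet, phiL s((e, 0), (e, 1)) = Sum.inl (fst e))
    (h1 : ∀ e : H.edgeSet, phiL s((e, 1), (e, 2)) = Sum.inr (phi e))
    (h2 : ∀ e : H.edgeSet, phiL s((e, 2), (e, 3)) = Sum.inl (snd e)) :
    maxRainbow H phi + H.edgeSet.ncard ≤ maxRainbow L phiL := by
  classical
  obtain ⟨sfn, hs_adj, hs2, hs_inj, hs_cov⟩ := exists_succ_fn H hreg
  have hκmem : ∀ v : V, s(v, sfn v) ∈ H.edgeSet := fun v => hs_adj v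
  set κ : V → H.edgeSet := fun v => ⟨s(v, sfn v), hκmem v⟩ with hκ
  have hsne : ∀ v, sfn v ≠ v := fun v => (hs_adj v).ne'
  have hκinj : Function.Injective κ := by
    intro v1 v2 h
    have h' : s(v1, sfn v1) = s(v2, sfn v2) := congrArg Subtype.val h
    rcases Sym2.eq_iff.mp h' with ⟨ha, _⟩ | ⟨ha, hb⟩
    · exact ha
    · exfalso; apply hs2 v2; rw [← ha, hb]
  have hκsurj : Function.Surjective κ := by
    rintro ⟨e, he⟩
    induction e using Sym2.ind with
    | _ a b =>
      rcases hs_cov a b (he : H.Adj a b) with h | h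
      · exact ⟨a, Subtype.ext (by simp only [hκ]; rw [h])⟩
      · exact ⟨b, Subtype.ext (by simp only [hκ]; rw [h, Sym2.eq_swap])⟩
  set κe : V ≃ H.edgeSet := Equiv.ofBijective κ ⟨hκinj, hκsurj⟩ with hκe
  set ve : H.edgeSet → V := fun e => κe.symm e with hvedef
  have hve : ∀ e, κ (ve e) = e := fun e => κe.apply_symm_apply e
  have hve2 : ∀ v, ve (κ v) = v := κe.symm_apply_apply
  have hve_inj : Function.Injective ve := κe.symm.injective
  have hval : ∀ e : H.edgeSet, (e : Sym2 V) = s(ve e, sfn (ve e)) :=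
    fun e => (congrArg Subtype.val (hve e)).symm
  obtain ⟨R, hR, hRcard⟩ := exists_maxRainbow H phi
  set R' : Set H.edgeSet := Subtype.val ⁻¹' R with hR'def
  set nextE : H.edgeSet → H.edgeSet := fun e => κ (sfn (ve e)) with hnextE
  set DD : Set H.edgeSet := nextE '' R' with hDDdef
  set rest : Set H.edgeSet := Set.univ \ (DD ∪ R') with hrestdef
  -- basic facts
  have hnext_val : ∀ e : H.edgeSet, ((nextE e : H.edgeSet) : Sym2 V)
      = s(sfn (ve e), sfn (sfn (ve e))) := by
    intro e; rfl
  have hnext_ve : ∀ e, ve (nextE e) = sfn (ve e) := fun e => hve2 _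
  have hnextinj : Function.Injective nextE := by
    intro a b h
    exact hve_inj (hs_inj (by rw [← hnext_ve a, ← hnext_ve b, h]))
  have hmemval : ∀ (e : H.edgeSet) (x : V), x ∈ (e : Sym2 V) ↔ x = ve e ∨ x = sfn (ve e) := by
    intro e x; rw [hval e]; exact Sym2.mem_iff
  have hne_next : ∀ m : H.edgeSet, nextE m ≠ m := by
    intro m hc
    have h' : ((nextE m : H.edgeSet) : Sym2 V) = (m : Sym2 V) := by rw [hc]
    rw [hnext_val, hval] at h'
    rcases Sym2.eq_iff.mp h' with ⟨ha, _⟩ | ⟨_, hb⟩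
    · exact hsne (ve m) ha
    · exact hs2 (ve m) hb
  have hDDR : ∀ m ∈ R', nextE m ∉ R' := by
    intro m hm hc
    have hd := hR.2.1 (m : Sym2 V) hm ((nextE m : H.edgeSet) : Sym2 V) hc
      (fun h => hne_next m (Subtype.ext h.symm)) (sfn (ve m))
    apply hd
    · rw [hval m]; exact Sym2.mem_mk_right _ _
    · rw [hnext_val]; exact Sym2.mem_mk_left _ _
  have hDD_disj : ∀ d ∈ DD, ∀ d' ∈ DD, d ≠ d' → ∀ x : V, x ∈ (d : Sym2 V) → x ∉ (d' : Sym2 V) := by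
    rintro d ⟨m, hm, rfl⟩ d' ⟨m', hm', rfl⟩ hdd x hx hx'
    have hu : x = sfn (ve m) ∨ x = sfn (sfn (ve m)) := by
      rw [hnext_val m] at hx; exact Sym2.mem_iff.mp hx
    have hu' : x = sfn (ve m') ∨ x = sfn (sfn (ve m')) := by
      rw [hnext_val m'] at hx'; exact Sym2.mem_iff.mp hx'
    have hmm' : m ≠ m' := fun h => hdd (by rw [h])
    rcases hu with rfl | rfl <;> rcases hu' with h | h
    · exact hmm' (hve_inj (hs_inj h))
    · -- sfn (ve m) = sfn (sfn (ve m')) : ve m = sfn (ve m'), so m = nextE m'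
      have : m = nextE m' := by
        apply hve_inj
        rw [hnext_ve, hs_inj h]
      exact hDDR m' hm' (this ▸ hm)
    · have : m' = nextE m := by
        apply hve_inj
        rw [hnext_ve, ← hs_inj h]
      exact hDDR m hm (this ▸ hm')
    · exact hmm' (hve_inj (hs_inj (hs_inj h)))
  have hhead_notin : ∀ e, e ∉ R' → e ∉ DD → ∀ d ∈ DD, sfn (ve e) ∉ (d : Sym2 V) := by
    rintro e heR heD d ⟨m, hm, rfl⟩ hmem
    rw [hnext_val m] at hmem
    rcases Sym2.mem_iff.mp hmem with h | h
    · exact heR (by rw [hve_inj (hs_inj h)]; exact hm)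
    · apply heD
      have : e = nextE m := by apply hve_inj; rw [hnext_ve, hs_inj h]
      exact ⟨m, hm, this.symm⟩
  have hfs : ∀ e : H.edgeSet, (fst e = ve e ∧ snd e = sfn (ve e)) ∨
      (fst e = sfn (ve e) ∧ snd e = ve e) := by
    intro e
    have h := (hends e).trans (hval e)
    rcases Sym2.eq_iff.mp h with ⟨ha, hb⟩ | ⟨ha, hb⟩
    · exact Or.inl ⟨ha, hb⟩
    · exact Or.inr ⟨ha, hb⟩
  have hfst_mem : ∀ e : H.edgeSet, fst e ∈ (e : Sym2 V) := by
    intro e; rw [← hends e]; exact Sym2.mem_mk_left _ _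
  have hsnd_mem : ∀ e : H.edgeSet, snd e ∈ (e : Sym2 V) := by
    intro e; rw [← hends e]; exact Sym2.mem_mk_right _ _
  have hfs_ne : ∀ e : H.edgeSet, fst e ≠ snd e := by
    intro e
    rcases hfs e with ⟨ha, hb⟩ | ⟨ha, hb⟩ <;> rw [ha, hb]
    · exact (hsne (ve e)).symm
    · exact hsne (ve e)
  -- the rainbow matching in L
  set Eh : H.edgeSet → Sym2 (H.edgeSet × Fin 4) :=
    fun e => if fst e = sfn (ve e) then pe H e 0 else pe H e 2 with hEhdef
  have hEh_col : ∀ e : H.edgeSet, phiL (Eh e) = Sum.inl (sfn (ve e)) := by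
    intro e
    by_cases hc : fst e = sfn (ve e)
    · rw [hEhdef]; simp only [if_pos hc]; rw [pe0, h0, hc]
    · rw [hEhdef]; simp only [if_neg hc]; rw [pe2, h2]
      rcases hfs e with ⟨_, hb⟩ | ⟨ha, _⟩
      · rw [hb]
      · exact absurd ha hc
  set NL : Set (Sym2 (H.edgeSet × Fin 4)) :=
    (fun e => pe H e 0) '' DD ∪ (fun e => pe H e 2) '' DD ∪
    (fun e => pe H e 1) '' R' ∪ Eh '' rest with hNLdef
  have hDD_R' : ∀ d ∈ DD, d ∉ R' := by rintro d ⟨mm, hm, rfl⟩ hc; exact hDDR mm hm hc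
  have hrest_DD : ∀ e ∈ rest, e ∉ DD := fun e he hc => he.2 (Set.mem_union_left _ hc)
  have hrest_R' : ∀ e ∈ rest, e ∉ R' := fun e he hc => he.2 (Set.mem_union_right _ hc)
  have hpe_not_diag : ∀ (e : H.edgeSet) (i : Fin 3), ¬ (pe H e i).IsDiag := by
    intro e i hd
    rw [pe, Sym2.mk_isDiag_iff] at hd
    have := congrArg Fin.val (congrArg Prod.snd hd)
    simp [Fin.val_succ] at this
  have hpe_memL : ∀ (e : H.edgeSet) (i : Fin 3), pe H e i ∈ L.edgeSet := by
    intro e i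
    rw [hL, SimpleGraph.edgeSet_fromEdgeSet]
    exact ⟨⟨e, i, rfl⟩, hpe_not_diag e i⟩
  have hpe02 : ∀ (e : H.edgeSet) (v : H.edgeSet × Fin 4),
      v ∈ pe H e 0 → v ∈ pe H e 2 → False := by
    intro e v hv1 hv2
    rcases Sym2.mem_iff.mp hv1 with rfl | rfl <;>
      rcases Sym2.mem_iff.mp hv2 with h | h <;>
      (rw [Prod.mk.injEq] at h; exact absurd h.2 (by decide))
  have hchar : ∀ x ∈ NL, ∃ e i, x = pe H e i ∧
      ((e ∈ DD ∧ (i = 0 ∨ i = 2)) ∨ (e ∈ R' ∧ i = 1) ∨ (e ∈ rest ∧ Eh e = pe H e i)) := by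
    rintro x (((⟨e, he, rfl⟩ | ⟨e, he, rfl⟩) | ⟨e, he, rfl⟩) | ⟨e, he, rfl⟩)
    · exact ⟨e, 0, rfl, Or.inl ⟨he, Or.inl rfl⟩⟩
    · exact ⟨e, 2, rfl, Or.inl ⟨he, Or.inr rfl⟩⟩
    · exact ⟨e, 1, rfl, Or.inr (Or.inl ⟨he, rfl⟩)⟩
    · by_cases hc : fst e = sfn (ve e)
      · refine ⟨e, 0, ?_, Or.inr (Or.inr ⟨he, ?_⟩)⟩ <;> simp only [hEhdef, if_pos hc]
      · refine ⟨e, 2, ?_, Or.inr (Or.inr ⟨he, ?_⟩)⟩ <;> simp only [hEhdef, if_neg hc]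
  have hcol0 : ∀ e : H.edgeSet, phiL (pe H e 0) = Sum.inl (fst e) := fun e => h0 e
  have hcol1 : ∀ e : H.edgeSet, phiL (pe H e 1) = Sum.inr (phi e) := fun e => h1 e
  have hcol2 : ∀ e : H.edgeSet, phiL (pe H e 2) = Sum.inl (snd e) := fun e => h2 e
  -- the color of x in terms of its family
  have hNL : RainbowMatching L phiL NL := by
    refine ⟨?_, ?_, ?_⟩
    · rintro x hx
      obtain ⟨e, i, rfl, -⟩ := hchar x hx
      exact hpe_memL e i
    · -- pairwise disjoint
      intro x hx y hy hxy v hvx hvy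
      obtain ⟨e, i, rfl, hfx⟩ := hchar x hx
      obtain ⟨f, j, rfl, hfy⟩ := hchar y hy
      have hef : e = f := by
        have h1 := pe_fst H hvx
        have h2 := pe_fst H hvy
        rw [← h1, h2]
      subst hef
      rcases hfx with ⟨heD, hi⟩ | ⟨heR, rfl⟩ | ⟨heRest, hEhx⟩ <;>
        rcases hfy with ⟨heD', hj⟩ | ⟨heR', rfl⟩ | ⟨heRest', hEhy⟩
      · -- both DD
        rcases hi with rfl | rfl <;> rcases hj with rfl | rfl
        · exact hxy rfl
        · exact hpe02 e v hvx hvy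
        · exact hpe02 e v hvy hvx
        · exact hxy rfl
      · exact hDD_R' e heD heR'
      · exact hrest_DD e heRest' heD
      · exact hDD_R' e heD' heR
      · exact hxy rfl
      · exact hrest_R' e heRest' heR
      · exact hrest_DD e heRest heD'
      · exact hrest_R' e heRest heR'
      · exact hxy (by rw [← hEhx, ← hEhy])
    · -- injective colors
      intro x hx y hy heq
      obtain ⟨e, i, rfl, hfx⟩ := hchar x hx
      obtain ⟨f, j, rfl, hfy⟩ := hchar y hy
      by_cases hef : e = f
      · subst hef
        rcases hfx with ⟨heD, hi⟩ | ⟨heR, rfl⟩ | ⟨heRest, hEhx⟩ <;>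
          rcases hfy with ⟨heD', hj⟩ | ⟨heR', rfl⟩ | ⟨heRest', hEhy⟩
        · rcases hi with rfl | rfl <;> rcases hj with rfl | rfl
          · rfl
          · rw [hcol0, hcol2] at heq
            exact absurd (Sum.inl.inj heq) (hfs_ne e)
          · rw [hcol0, hcol2] at heq
            exact absurd (Sum.inl.inj heq).symm (hfs_ne e)
          · rfl
        · exact absurd heR' (hDD_R' e heD)
        · exact absurd heD (hrest_DD e heRest')
        · exact absurd heR (hDD_R' e heD')
        · rfl
        · exact absurd heR (hrest_R' e heRest')
        · exact absurd heD' (hrest_DD e heRest)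
        · exact absurd heR' (hrest_R' e heRest)
        · rw [← hEhx, ← hEhy]
      · -- different paths: colors must differ
        exfalso
        have hgen : ∀ (g : H.edgeSet) (k : Fin 3),
            ((g ∈ DD ∧ (k = 0 ∨ k = 2)) ∨ (g ∈ R' ∧ k = 1) ∨ (g ∈ rest ∧ Eh g = pe H g k)) →
            (∃ u, phiL (pe H g k) = Sum.inl u ∧ u ∈ (g : Sym2 V) ∧ g ∈ DD) ∨
            (phiL (pe H g k) = Sum.inr (phi g) ∧ g ∈ R') ∨
            (phiL (pe H g k) = Sum.inl (sfn (ve g)) ∧ g ∈ rest) := by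
          rintro g k (⟨hgD, hk⟩ | ⟨hgR, rfl⟩ | ⟨hgRest, hEhg⟩)
          · rcases hk with rfl | rfl
            · exact Or.inl ⟨fst g, hcol0 g, hfst_mem g, hgD⟩
            · exact Or.inl ⟨snd g, hcol2 g, hsnd_mem g, hgD⟩
          · exact Or.inr (Or.inl ⟨hcol1 g, hgR⟩)
          · exact Or.inr (Or.inr ⟨by rw [← hEhg, hEh_col], hgRest⟩)
        rcases hgen e i hfx with ⟨u, hu, humem, heD⟩ | ⟨hu, heR⟩ | ⟨hu, heRest⟩ <;>
          rcases hgen f j hfy with ⟨w, hw, hwmem, hfD⟩ | ⟨hw, hfR⟩ | ⟨hw, hfRest⟩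
        · rw [hu, hw] at heq
          have huw := Sum.inl.inj heq
          exact hDD_disj e heD f hfD hef u humem (huw ▸ hwmem)
        · rw [hu, hw] at heq; exact Sum.inl_ne_inr heq
        · rw [hu, hw] at heq
          have huw := Sum.inl.inj heq
          exact hhead_notin f (hrest_R' f hfRest) (hrest_DD f hfRest) e heD (huw ▸ humem)
        · rw [hu, hw] at heq; exact Sum.inr_ne_inl heq
        · rw [hu, hw] at heq
          have := hR.2.2 heR hfR (Sum.inr.inj heq)
          exact hef (Subtype.ext this)
        · rw [hu, hw] at heq; exact Sum.inr_ne_inl heq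
        · rw [hu, hw] at heq
          have huw := Sum.inl.inj heq
          exact hhead_notin e (hrest_R' e heRest) (hrest_DD e heRest) f hfD (huw ▸ hwmem)
        · rw [hu, hw] at heq; exact Sum.inl_ne_inr heq
        · rw [hu, hw] at heq
          have := hve_inj (hs_inj (Sum.inl.inj heq))
          exact hef this
  have hR'card : R'.ncard = R.ncard := by
    have himg : Subtype.val '' R' = R := by
      rw [hR'def, Subtype.image_preimage_coe]
      exact Set.inter_eq_self_of_subset_right hR.1
    rw [← himg, Set.ncard_image_of_injective _ Subtype.val_injective]
  have hDDcard : DD.ncard = R'.ncard := Set.ncard_image_of_injective _ hnextinj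
  have hDisjDR : Disjoint DD R' := Set.disjoint_left.mpr (fun d hd => hDD_R' d hd)
  have hDUcard : (DD ∪ R').ncard = DD.ncard + R'.ncard :=
    Set.ncard_union_eq hDisjDR (Set.toFinite _) (Set.toFinite _)
  have hsub : DD ∪ R' ⊆ (Set.univ : Set H.edgeSet) := Set.subset_univ _
  have hrest_card : rest.ncard = H.edgeSet.ncard - (DD.ncard + R'.ncard) := by
    rw [hrestdef, Set.ncard_diff hsub (Set.toFinite _), hDUcard, Set.ncard_univ,
      Nat.card_coe_set_eq]
  have hle : DD.ncard + R'.ncard ≤ H.edgeSet.ncard := by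
    have := Set.ncard_le_ncard hsub (Set.toFinite _)
    rw [hDUcard] at this
    rwa [Set.ncard_univ, Nat.card_coe_set_eq] at this
  have hEh_inj : Function.Injective Eh := by
    intro a b h
    rw [hEhdef] at h
    simp only at h
    split_ifs at h
    · exact (pe_inj H h).1
    · exact absurd (pe_inj H h).2 (by decide)
    · exact absurd (pe_inj H h).2 (by decide)
    · exact (pe_inj H h).1
  have hEh_mem_pe : ∀ g : H.edgeSet, Eh g = pe H g 0 ∨ Eh g = pe H g 2 := by
    intro g
    by_cases hc : fst g = sfn (ve g)
    · left
      show (if fst g = sfn (ve g) then pe H g 0 else pe H g 2) = pe H g 0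
      rw [if_pos hc]
    · right
      show (if fst g = sfn (ve g) then pe H g 0 else pe H g 2) = pe H g 2
      rw [if_neg hc]
  have hNLcard : NL.ncard = maxRainbow H phi + H.edgeSet.ncard := by
    set A : Set (Sym2 (H.edgeSet × Fin 4)) := (fun e => pe H e 0) '' DD with hA
    set B : Set (Sym2 (H.edgeSet × Fin 4)) := (fun e => pe H e 2) '' DD with hB
    set Cq : Set (Sym2 (H.edgeSet × Fin 4)) := (fun e => pe H e 1) '' R' with hC
    set Dq : Set (Sym2 (H.edgeSet × Fin 4)) := Eh '' rest with hD
    have dAB : Disjoint A B := by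
      rw [Set.disjoint_left]
      rintro x ⟨a, _, rfl⟩ ⟨b, _, hab⟩
      exact absurd (pe_inj H hab).2 (by decide)
    have dAC : Disjoint A Cq := by
      rw [Set.disjoint_left]
      rintro x ⟨a, _, rfl⟩ ⟨b, _, hab⟩
      exact absurd (pe_inj H hab).2 (by decide)
    have dBC : Disjoint B Cq := by
      rw [Set.disjoint_left]
      rintro x ⟨a, _, rfl⟩ ⟨b, _, hab⟩
      exact absurd (pe_inj H hab).2 (by decide)
    have dAD : Disjoint A Dq := by
      rw [Set.disjoint_left]
      rintro x ⟨a, haD, rfl⟩ ⟨b, hbR, hab⟩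
      rcases hEh_mem_pe b with hb | hb <;> rw [hb] at hab
      · exact hrest_DD b hbR ((pe_inj H hab).1 ▸ haD)
      · exact absurd (pe_inj H hab).2 (by decide)
    have dBD : Disjoint B Dq := by
      rw [Set.disjoint_left]
      rintro x ⟨a, haD, rfl⟩ ⟨b, hbR, hab⟩
      rcases hEh_mem_pe b with hb | hb <;> rw [hb] at hab
      · exact absurd (pe_inj H hab).2 (by decide)
      · exact hrest_DD b hbR ((pe_inj H hab).1 ▸ haD)
    have dCD : Disjoint Cq Dq := by
      rw [Set.disjoint_left]
      rintro x ⟨a, haD, rfl⟩ ⟨b, hbR, hab⟩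
      rcases hEh_mem_pe b with hb | hb <;> rw [hb] at hab <;>
        exact absurd (pe_inj H hab).2 (by decide)
    have hcA : A.ncard = DD.ncard :=
      Set.ncard_image_of_injective _ (fun a b h => (pe_inj H h).1)
    have hcB : B.ncard = DD.ncard :=
      Set.ncard_image_of_injective _ (fun a b h => (pe_inj H h).1)
    have hcC : Cq.ncard = R'.ncard :=
      Set.ncard_image_of_injective _ (fun a b h => (pe_inj H h).1)
    have hcD : Dq.ncard = rest.ncard := Set.ncard_image_of_injective _ hEh_inj
    have hu1 : (A ∪ B).ncard = A.ncard + B.ncard :=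
      Set.ncard_union_eq dAB (Set.toFinite _) (Set.toFinite _)
    have hu2 : (A ∪ B ∪ Cq).ncard = (A ∪ B).ncard + Cq.ncard :=
      Set.ncard_union_eq (Set.disjoint_union_left.mpr ⟨dAC, dBC⟩)
        (Set.toFinite _) (Set.toFinite _)
    have hu3 : (A ∪ B ∪ Cq ∪ Dq).ncard = (A ∪ B ∪ Cq).ncard + Dq.ncard :=
      Set.ncard_union_eq
        (Set.disjoint_union_left.mpr ⟨Set.disjoint_union_left.mpr ⟨dAD, dBD⟩, dCD⟩)
        (Set.toFinite _) (Set.toFinite _)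
    have : NL.ncard = A.ncard + B.ncard + Cq.ncard + Dq.ncard := by
      rw [hNLdef]
      rw [hu3, hu2, hu1]
    rw [this, hcA, hcB, hcC, hcD, hrest_card, hDDcard, hR'card, hRcard]
    omega
  calc maxRainbow H phi + H.edgeSet.ncard = NL.ncard := hNLcard.symm
    _ ≤ maxRainbow L phiL := ncard_le_maxRainbow hNL

lemma upper_aux {V C : Type*} [Fintype V] [DecidableEq V]
    (H : SimpleGraph V) (phi : Sym2 V → C)
    (hreg : ∀ v : V, (H.neighborSet v).ncard = 2)
    (fst snd : H.edgeSet → V)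
    (hends : ∀ e : H.edgeSet, s(fst e, snd e) = (e : Sym2 V))
    (L : SimpleGraph (H.edgeSet × Fin 4))
    (hL : L = SimpleGraph.fromEdgeSet
      {p | ∃ (e : H.edgeSet) (i : Fin 3), p = s((e, i.castSucc), (e, i.succ))})
    (phiL : Sym2 (H.edgeSet × Fin 4) → V ⊕ C)
    (h0 : ∀ e : H.edgeSet, phiL s((e, 0), (e, 1)) = Sum.inl (fst e))
    (h1 : ∀ e : H.edgeSet, phiL s((e, 1), (e, 2)) = Sum.inr (phi e))
    (h2 : ∀ e : H.edgeSet, phiL s((e, 2), (e, 3)) = Sum.inl (snd e)) :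
    maxRainbow L phiL ≤ maxRainbow H phi + H.edgeSet.ncard := by
  classical
  -- |E| = |V|
  obtain ⟨sfn, hs_adj, hs2, hs_inj, hs_cov⟩ := exists_succ_fn H hreg
  have hκmem : ∀ v : V, s(v, sfn v) ∈ H.edgeSet := fun v => hs_adj v
  set κ : V → H.edgeSet := fun v => ⟨s(v, sfn v), hκmem v⟩ with hκ
  have hκinj : Function.Injective κ := by
    intro v1 v2 h
    have h' : s(v1, sfn v1) = s(v2, sfn v2) := congrArg Subtype.val h
    rcases Sym2.eq_iff.mp h' with ⟨ha, _⟩ | ⟨ha, hb⟩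
    · exact ha
    · exfalso; apply hs2 v2; rw [← ha, hb]
  have hκsurj : Function.Surjective κ := by
    rintro ⟨e, he⟩
    induction e using Sym2.ind with
    | _ a b =>
      rcases hs_cov a b (he : H.Adj a b) with h | h
      · exact ⟨a, Subtype.ext (by simp only [hκ]; rw [h])⟩
      · exact ⟨b, Subtype.ext (by simp only [hκ]; rw [h, Sym2.eq_swap])⟩
  have hm : H.edgeSet.ncard = Nat.card V := by
    rw [← Nat.card_coe_set_eq]
    exact Nat.card_congr (Equiv.ofBijective κ ⟨hκinj, hκsurj⟩).symm
  -- maximum rainbow matching of L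
  obtain ⟨NN, hNN, hNNcard⟩ := exists_maxRainbow L phiL
  rw [← hNNcard]
  -- colors
  have hcol0 : ∀ e : H.edgeSet, phiL (pe H e 0) = Sum.inl (fst e) := fun e => h0 e
  have hcol1 : ∀ e : H.edgeSet, phiL (pe H e 1) = Sum.inr (phi e) := fun e => h1 e
  have hcol2 : ∀ e : H.edgeSet, phiL (pe H e 2) = Sum.inl (snd e) := fun e => h2 e
  have hmemfs : ∀ (e : H.edgeSet) (x : V), x ∈ (e : Sym2 V) ↔ x = fst e ∨ x = snd e := by
    intro e x; rw [← hends e]; exact Sym2.mem_iff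
  have hfs_ne : ∀ e : H.edgeSet, fst e ≠ snd e := by
    intro e hc
    apply H.not_isDiag_of_mem_edgeSet e.2
    rw [← hends e, Sym2.mk_isDiag_iff]
    exact hc
  have hfst_mem : ∀ e : H.edgeSet, fst e ∈ (e : Sym2 V) := by
    intro e; rw [← hends e]; exact Sym2.mem_mk_left _ _
  have hsnd_mem : ∀ e : H.edgeSet, snd e ∈ (e : Sym2 V) := by
    intro e; rw [← hends e]; exact Sym2.mem_mk_right _ _
  -- classification
  set A0 : Set H.edgeSet := {e | pe H e 0 ∈ NN} with hA0def
  set A1 : Set H.edgeSet := {e | pe H e 1 ∈ NN} with hA1def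
  set A2 : Set H.edgeSet := {e | pe H e 2 ∈ NN} with hA2def
  have hA1A0 : ∀ e : H.edgeSet, e ∈ A1 → e ∉ A0 := by
    intro e he1 he0
    have hne : pe H e 0 ≠ pe H e 1 := fun h => absurd (pe_inj H h).2 (by decide)
    have hv0 : (e, (1 : Fin 4)) ∈ pe H e 0 := Sym2.mem_mk_right _ _
    have hv1 : (e, (1 : Fin 4)) ∈ pe H e 1 := Sym2.mem_mk_left _ _
    exact hNN.2.1 _ he0 _ he1 hne _ hv0 hv1
  have hA1A2 : ∀ e : H.edgeSet, e ∈ A1 → e ∉ A2 := by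
    intro e he1 he2
    have hne : pe H e 1 ≠ pe H e 2 := fun h => absurd (pe_inj H h).2 (by decide)
    have hv1 : (e, (2 : Fin 4)) ∈ pe H e 1 := Sym2.mem_mk_right _ _
    have hv2 : (e, (2 : Fin 4)) ∈ pe H e 2 := Sym2.mem_mk_left _ _
    exact hNN.2.1 _ he1 _ he2 hne _ hv1 hv2
  -- counting NN
  have hfin3 : ∀ i : Fin 3, i = 0 ∨ i = 1 ∨ i = 2 := by decide
  have hNNsplit : NN = (fun e => pe H e 0) '' A0 ∪ (fun e => pe H e 1) '' A1 ∪
      (fun e => pe H e 2) '' A2 := by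
    apply Set.Subset.antisymm
    · intro x hx
      have hxL := hNN.1 hx
      rw [hL, SimpleGraph.edgeSet_fromEdgeSet] at hxL
      obtain ⟨⟨e, i, rfl⟩, -⟩ := hxL
      rcases hfin3 i with rfl | rfl | rfl
      · exact Or.inl (Or.inl ⟨e, hx, rfl⟩)
      · exact Or.inl (Or.inr ⟨e, hx, rfl⟩)
      · exact Or.inr ⟨e, hx, rfl⟩
    · rintro x ((⟨e, he, rfl⟩ | ⟨e, he, rfl⟩) | ⟨e, he, rfl⟩) <;> exact he
  have hNNcount : NN.ncard = A0.ncard + A1.ncard + A2.ncard := by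
    have d01 : Disjoint ((fun e => pe H e 0) '' A0) ((fun e => pe H e 1) '' A1) := by
      rw [Set.disjoint_left]
      rintro x ⟨a, _, rfl⟩ ⟨b, _, hab⟩
      exact absurd (pe_inj H hab).2 (by decide)
    have d02 : Disjoint ((fun e => pe H e 0) '' A0) ((fun e => pe H e 2) '' A2) := by
      rw [Set.disjoint_left]
      rintro x ⟨a, _, rfl⟩ ⟨b, _, hab⟩
      exact absurd (pe_inj H hab).2 (by decide)
    have d12 : Disjoint ((fun e => pe H e 1) '' A1) ((fun e => pe H e 2) '' A2) := by
      rw [Set.disjoint_left]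
      rintro x ⟨a, _, rfl⟩ ⟨b, _, hab⟩
      exact absurd (pe_inj H hab).2 (by decide)
    rw [hNNsplit,
      Set.ncard_union_eq (Set.disjoint_union_left.mpr ⟨d02, d12⟩) (Set.toFinite _) (Set.toFinite _),
      Set.ncard_union_eq d01 (Set.toFinite _) (Set.toFinite _),
      Set.ncard_image_of_injective _ (fun a b h => (pe_inj H h).1),
      Set.ncard_image_of_injective _ (fun a b h => (pe_inj H h).1),
      Set.ncard_image_of_injective _ (fun a b h => (pe_inj H h).1)]
  -- D, S0 and psi
  set D : Set H.edgeSet := A0 ∩ A2 with hDdef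
  set S0 : Set H.edgeSet := (A0 ∪ A2) \ D with hS0def
  set ψ : H.edgeSet → V := fun e => if pe H e 0 ∈ NN then fst e else snd e with hψdef
  have hψS : ∀ e ∈ A0 ∪ A2, ∃ k : Fin 3, pe H e k ∈ NN ∧ phiL (pe H e k) = Sum.inl (ψ e) := by
    intro e he
    by_cases hc : pe H e 0 ∈ NN
    · refine ⟨0, hc, ?_⟩
      rw [hcol0]
      simp only [hψdef, if_pos hc]
    · have he2 : e ∈ A2 := by
        rcases he with h | h
        · exact absurd h hc
        · exact h
      refine ⟨2, he2, ?_⟩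
      rw [hcol2]
      simp only [hψdef, if_neg hc]
  have hψ_mem : ∀ e : H.edgeSet, ψ e ∈ (e : Sym2 V) := by
    intro e
    by_cases hc : pe H e 0 ∈ NN <;> simp only [hψdef, if_pos, if_neg, hc, if_true, if_false]
    · exact hfst_mem e
    · exact hsnd_mem e
  -- injectivity facts from rainbow colors
  have hinl_inj : ∀ (a b : H.edgeSet) (i j : Fin 3), pe H a i ∈ NN → pe H b j ∈ NN →
      phiL (pe H a i) = phiL (pe H b j) → a = b := by
    intro a b i j ha hb hcol
    exact (pe_inj H (hNN.2.2 ha hb hcol)).1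
  -- D is a matching
  have hD0 : ∀ e ∈ D, pe H e 0 ∈ NN := fun e he => he.1
  have hD2 : ∀ e ∈ D, pe H e 2 ∈ NN := fun e he => he.2
  have hDS0 : ∀ e ∈ S0, e ∉ D := fun e he => he.2
  have hD_disj : ∀ d ∈ D, ∀ d' ∈ D, d ≠ d' → ∀ x : V, x ∈ (d : Sym2 V) → x ∉ (d' : Sym2 V) := by
    intro d hd d' hd' hne x hx hx'
    rw [hmemfs] at hx hx'
    rcases hx with rfl | rfl <;> rcases hx' with h | h
    · exact hne (hinl_inj d d' 0 0 (hD0 d hd) (hD0 d' hd') (by rw [hcol0, hcol0, h]))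
    · exact hne (hinl_inj d d' 0 2 (hD0 d hd) (hD2 d' hd') (by rw [hcol0, hcol2, h]))
    · exact hne (hinl_inj d d' 2 0 (hD2 d hd) (hD0 d' hd') (by rw [hcol2, hcol0, h]))
    · exact hne (hinl_inj d d' 2 2 (hD2 d hd) (hD2 d' hd') (by rw [hcol2, hcol2, h]))
  have hψ_inj : ∀ e ∈ S0, ∀ f ∈ S0, ψ e = ψ f → e = f := by
    intro e he f hf hef
    obtain ⟨k, hk, hkc⟩ := hψS e he.1
    obtain ⟨k', hk', hkc'⟩ := hψS f hf.1
    exact hinl_inj e f k k' hk hk' (by rw [hkc, hkc', hef])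
  have hψD : ∀ e ∈ S0, ∀ d ∈ D, ψ e ∉ (d : Sym2 V) := by
    intro e he d hd hmem
    rw [hmemfs] at hmem
    obtain ⟨k, hk, hkc⟩ := hψS e he.1
    rcases hmem with h | h
    · exact (hDS0 e he) ((hinl_inj e d k 0 hk (hD0 d hd) (by rw [hkc, hcol0, h])) ▸ hd)
    · exact (hDS0 e he) ((hinl_inj e d k 2 hk (hD2 d hd) (by rw [hkc, hcol2, h])) ▸ hd)
  -- sets of H-edges
  set Dv : Set (Sym2 V) := Subtype.val '' D with hDvdef
  set Sv : Set (Sym2 V) := Subtype.val '' S0 with hSvdef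
  set Tv : Set (Sym2 V) := Subtype.val '' A1 with hTvdef
  set F : Set (Sym2 V) := H.edgeSet \ (Dv ∪ Sv) with hFdef
  have hFsub : F ⊆ H.edgeSet := Set.diff_subset
  obtain ⟨P, hPF, hPdis, hPcount⟩ := matching_of_low_degree hreg F hFsub
  set Aset : Set V := {v | ∃ f1 ∈ F, ∃ f2 ∈ F, f1 ≠ f2 ∧ v ∈ f1 ∧ v ∈ f2} with hAsetdef
  -- Aset and the vertex images are disjoint
  set X1 : Set V := (fun e => fst e) '' D with hX1def
  set X2 : Set V := (fun e => snd e) '' D with hX2def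
  set X3 : Set V := ψ '' S0 with hX3def
  have hDvF : ∀ d ∈ D, (d : Sym2 V) ∉ F := by
    intro d hd hc
    exact hc.2 (Or.inl ⟨d, hd, rfl⟩)
  have hSvF : ∀ e ∈ S0, (e : Sym2 V) ∉ F := by
    intro e he hc
    exact hc.2 (Or.inr ⟨e, he, rfl⟩)
  have hAX : ∀ x ∈ Aset, ∀ (g : H.edgeSet), x ∈ (g : Sym2 V) → (g : Sym2 V) ∉ F → False := by
    rintro x ⟨f1, hf1, f2, hf2, hne, hx1, hx2⟩ g hxg hgF
    exact at_most_two_edges hreg (hFsub hf1) (hFsub hf2) g.2 hx1 hx2 hxg hne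
      (fun h => hgF (h ▸ hf1)) (fun h => hgF (h ▸ hf2))
  have dA1 : Disjoint Aset X1 := by
    rw [Set.disjoint_left]
    rintro x hxA ⟨d, hd, rfl⟩
    exact hAX _ hxA d (hfst_mem d) (hDvF d hd)
  have dA2 : Disjoint Aset X2 := by
    rw [Set.disjoint_left]
    rintro x hxA ⟨d, hd, rfl⟩
    exact hAX _ hxA d (hsnd_mem d) (hDvF d hd)
  have dA3 : Disjoint Aset X3 := by
    rw [Set.disjoint_left]
    rintro x hxA ⟨e, he, rfl⟩
    exact hAX _ hxA e (hψ_mem e) (hSvF e he)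
  have d12 : Disjoint X1 X2 := by
    rw [Set.disjoint_left]
    rintro x ⟨d, hd, rfl⟩ ⟨d', hd', hdd⟩
    simp only at hdd
    by_cases h : d = d'
    · subst h; exact hfs_ne d hdd.symm
    · exact hD_disj d' hd' d hd (fun hc => h hc.symm) (fst d)
        (by rw [← hdd]; exact hsnd_mem d') (hfst_mem d)
  have d13 : Disjoint X1 X3 := by
    rw [Set.disjoint_left]
    rintro x ⟨d, hd, rfl⟩ ⟨e, he, hee⟩
    exact hψD e he d hd (hee ▸ hfst_mem d)
  have d23 : Disjoint X2 X3 := by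
    rw [Set.disjoint_left]
    rintro x ⟨d, hd, rfl⟩ ⟨e, he, hee⟩
    exact hψD e he d hd (hee ▸ hsnd_mem d)
  have hX1c : X1.ncard = D.ncard := by
    apply Set.ncard_image_of_injOn
    intro a ha b hb hab
    exact hinl_inj a b 0 0 (hD0 a ha) (hD0 b hb)
      (by rw [hcol0, hcol0]; exact congrArg Sum.inl hab)
  have hX2c : X2.ncard = D.ncard := by
    apply Set.ncard_image_of_injOn
    intro a ha b hb hab
    exact hinl_inj a b 2 2 (hD2 a ha) (hD2 b hb)
      (by rw [hcol2, hcol2]; exact congrArg Sum.inl hab)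
  have hX3c : X3.ncard = S0.ncard := by
    apply Set.ncard_image_of_injOn
    intro a ha b hb hab
    exact hψ_inj a ha b hb hab
  have hvertex : Aset.ncard + D.ncard + D.ncard + S0.ncard ≤ Nat.card V := by
    have hu : (Aset ∪ X1 ∪ X2 ∪ X3).ncard ≤ (Set.univ : Set V).ncard :=
      Set.ncard_le_ncard (Set.subset_univ _) (Set.toFinite _)
    rw [Set.ncard_univ] at hu
    rw [Set.ncard_union_eq
        (Set.disjoint_union_left.mpr ⟨Set.disjoint_union_left.mpr ⟨dA3, d13⟩, d23⟩)
        (Set.toFinite _) (Set.toFinite _),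
      Set.ncard_union_eq (Set.disjoint_union_left.mpr ⟨dA2, d12⟩)
        (Set.toFinite _) (Set.toFinite _),
      Set.ncard_union_eq dA1 (Set.toFinite _) (Set.toFinite _), hX1c, hX2c, hX3c] at hu
    omega
  -- sizes of F and Tv
  have hDvSv : Disjoint Dv Sv := by
    rw [Set.disjoint_left]
    rintro x ⟨d, hd, rfl⟩ ⟨e, he, hee⟩
    exact hDS0 e he ((Subtype.val_injective hee) ▸ hd)
  have hDvSv_sub : Dv ∪ Sv ⊆ H.edgeSet := by
    rintro x ((⟨d, _, rfl⟩) | (⟨e, _, rfl⟩)) <;> exact Subtype.coe_prop _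
  have hDvc : Dv.ncard = D.ncard := Set.ncard_image_of_injective _ Subtype.val_injective
  have hSvc : Sv.ncard = S0.ncard := Set.ncard_image_of_injective _ Subtype.val_injective
  have hTvc : Tv.ncard = A1.ncard := Set.ncard_image_of_injective _ Subtype.val_injective
  have hFc : F.ncard = H.edgeSet.ncard - (D.ncard + S0.ncard) := by
    rw [hFdef, Set.ncard_diff hDvSv_sub (Set.toFinite _),
      Set.ncard_union_eq hDvSv (Set.toFinite _) (Set.toFinite _), hDvc, hSvc]
  have hDSle : D.ncard + S0.ncard ≤ H.edgeSet.ncard := by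
    have := Set.ncard_le_ncard hDvSv_sub (Set.toFinite _)
    rwa [Set.ncard_union_eq hDvSv (Set.toFinite _) (Set.toFinite _), hDvc, hSvc] at this
  have hTvF : Tv ⊆ F := by
    rintro x ⟨e, he, rfl⟩
    refine ⟨Subtype.coe_prop e, ?_⟩
    rintro ((⟨d, hd, hdd⟩) | (⟨f, hf, hff⟩))
    · have : d = e := Subtype.val_injective hdd
      subst this
      exact hA1A0 d he hd.1
    · have : f = e := Subtype.val_injective hff
      subst this
      rcases hf.1 with h | h
      · exact hA1A0 f he h
      · exact hA1A2 f he h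
  have hTvFc : (F \ Tv).ncard = F.ncard - A1.ncard := by
    rw [Set.ncard_diff hTvF (Set.toFinite _), hTvc]
  have hA1F : A1.ncard ≤ F.ncard := by
    rw [← hTvc]
    exact Set.ncard_le_ncard hTvF (Set.toFinite _)
  -- the rainbow matching in H
  set R' : Set (Sym2 V) := P ∩ Tv with hR'def
  have hR' : RainbowMatching H phi R' := by
    refine ⟨fun x hx => hFsub (hPF hx.1), fun e he f hf hne v hv => hPdis e he.1 f hf.1 hne v hv, ?_⟩
    rintro x ⟨-, e, he, rfl⟩ y ⟨-, f, hf, rfl⟩ hxy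
    have : e = f := by
      apply hinl_inj e f 1 1 he hf
      rw [hcol1, hcol1, hxy]
    rw [this]
  have hR'le : R'.ncard ≤ maxRainbow H phi := ncard_le_maxRainbow hR'
  have hPsplit : P.ncard ≤ R'.ncard + (F \ Tv).ncard := by
    have hsub : P ⊆ R' ∪ (F \ Tv) := by
      intro x hx
      by_cases hc : x ∈ Tv
      · exact Or.inl ⟨hx, hc⟩
      · exact Or.inr ⟨hPF hx, hc⟩
    calc P.ncard ≤ (R' ∪ (F \ Tv)).ncard := Set.ncard_le_ncard hsub (Set.toFinite _)
      _ ≤ R'.ncard + (F \ Tv).ncard := Set.ncard_union_le _ _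
  -- arithmetic
  have hcutDS : (A0 ∪ A2).ncard + D.ncard = A0.ncard + A2.ncard :=
    Set.ncard_union_add_ncard_inter _ _ (Set.toFinite _) (Set.toFinite _)
  have hDsub : D ⊆ A0 ∪ A2 := fun x hx => Or.inl hx.1
  have hS0c : S0.ncard = (A0 ∪ A2).ncard - D.ncard := by
    rw [hS0def, Set.ncard_diff hDsub (Set.toFinite _)]
  have hDle : D.ncard ≤ (A0 ∪ A2).ncard :=
    Set.ncard_le_ncard hDsub (Set.toFinite _)
  rw [hNNcount]
  omega

/-- Let `H` be a properly edge-colored triangle-free 2-regular graph.  Build the linear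
forest `L` with one path of three edges for each edge `e = vw` of `H`, the three edges
being colored `v`, `phi e`, `w` in order (vertices of `H` serve as new colors, via
`Sum.inl`).  Then the maximum rainbow matching size of `L` equals that of `H`
plus the number of edges of `H`. -/
theorem maxRainbow_edge_paths {V C : Type*} [Fintype V] [DecidableEq V]
    (H : SimpleGraph V) (phi : Sym2 V → C)
    (hproper : ProperColoring H phi)
    (htf : H.CliqueFree 3)
    (hreg : ∀ v : V, (H.neighborSet v).ncard = 2)
    (fst snd : H.edgeSet → V)
    (hends : ∀ e : H.edgeSet, s(fst e, snd e) = (e : Sym2 V))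
    (L : SimpleGraph (H.edgeSet × Fin 4))
    (hL : L = SimpleGraph.fromEdgeSet
      {p | ∃ (e : H.edgeSet) (i : Fin 3), p = s((e, i.castSucc), (e, i.succ))})
    (phiL : Sym2 (H.edgeSet × Fin 4) → V ⊕ C)
    (h0 : ∀ e : H.edgeSet, phiL s((e, 0), (e, 1)) = Sum.inl (fst e))
    (h1 : ∀ e : H.edgeSet, phiL s((e, 1), (e, 2)) = Sum.inr (phi e))
    (h2 : ∀ e : H.edgeSet, phiL s((e, 2), (e, 3)) = Sum.inl (snd e)) :
    maxRainbow L phiL = maxRainbow H phi + H.edgeSet.ncard := by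
  apply le_antisymm
  · exact upper_aux H phi hreg fst snd hends L hL phiL h0 h1 h2
  · exact lower_aux H phi hreg fst snd hends L hL phiL h0 h1 h2
end

section
/- Let L be an edge-colored linear forest each of whose components is a path with exactly 3 edges. Form G from L by adding, for each component path P (with edges colored a, b, c in order), one extra edge joining the two endpoints of P, colored b (the color of the middle edge), turning P into a 4-cycle. Then G contains no induced P_4, and the maximum rainbow matching size of G equals that of L. -/
set_option maxRecDepth 10000


open SimpleGraph

def R4 (x y : Fin 4) : Prop :=
  (∃ j : Fin 3, s(x,y) = s(j.castSucc, j.succ)) ∨ s(x,y) = s((0:Fin 4),3)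

instance : ∀ x y, Decidable (R4 x y) := fun x y => by unfold R4; infer_instance

lemma pairEq {I : Type*} (i : I) (u v : I × Fin 4) (x y : Fin 4) :
    s(u,v) = s((i,x),(i,y)) ↔ (u.1 = i ∧ v.1 = i ∧ s(u.2,v.2) = s(x,y)) := by
  rw [Sym2.eq_iff, Sym2.eq_iff]
  constructor
  · rintro (⟨rfl,rfl⟩|⟨rfl,rfl⟩) <;> simp
  · rintro ⟨h1, h2, (⟨h3,h4⟩|⟨h3,h4⟩)⟩
    · left; exact ⟨Prod.ext h1 h3, Prod.ext h2 h4⟩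
    · right; exact ⟨Prod.ext h1 h3, Prod.ext h2 h4⟩

lemma adjG {I : Type*} (u v : I × Fin 4) :
    (SimpleGraph.fromEdgeSet
      ({p | ∃ (i : I) (j : Fin 3), p = s((i, j.castSucc), (i, j.succ))} ∪
        {p | ∃ i : I, p = s((i, 0), (i, 3))})).Adj u v ↔ u.1 = v.1 ∧ R4 u.2 v.2 := by
  rw [fromEdgeSet_adj]
  constructor
  · rintro ⟨(⟨i, j, h⟩ | ⟨i, h⟩), hne⟩
    · rw [pairEq] at h
      exact ⟨h.1.trans h.2.1.symm, Or.inl ⟨j, h.2.2⟩⟩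
    · rw [pairEq] at h
      exact ⟨h.1.trans h.2.1.symm, Or.inr h.2.2⟩
  · rintro ⟨h1, (⟨j, h⟩ | h)⟩
    · refine ⟨Or.inl ⟨u.1, j, ?_⟩, ?_⟩
      · rw [pairEq]; exact ⟨rfl, h1.symm, h⟩
      · rintro rfl
        exact (by decide : ∀ x, ¬ R4 x x) u.2 (Or.inl ⟨j, h⟩)
    · refine ⟨Or.inr ⟨u.1, ?_⟩, ?_⟩
      · rw [pairEq]; exact ⟨rfl, h1.symm, h⟩
      · rintro rfl
        exact (by decide : ∀ x, ¬ R4 x x) u.2 (Or.inr h)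


lemma noP4_aux {I : Type*} (G : SimpleGraph (I × Fin 4))
    (hG : G = SimpleGraph.fromEdgeSet
      ({p | ∃ (i : I) (j : Fin 3), p = s((i, j.castSucc), (i, j.succ))} ∪
        {p | ∃ i : I, p = s((i, 0), (i, 3))})) :
    (¬ ∃ f : Fin 4 → I × Fin 4, Function.Injective f ∧
        (∀ j : Fin 3, G.Adj (f j.castSucc) (f j.succ)) ∧
        ¬ G.Adj (f 0) (f 2) ∧ ¬ G.Adj (f 0) (f 3) ∧ ¬ G.Adj (f 1) (f 3)) := by
  subst hG
  rintro ⟨f, hinj, hadj, h02, h03, h13⟩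
  have A : ∀ j : Fin 3, (f j.castSucc).1 = (f j.succ).1 ∧ R4 (f j.castSucc).2 (f j.succ).2 :=
    fun j => (adjG _ _).1 (hadj j)
  have e01 := A 0
  have e12 := A 1
  have e23 := A 2
  rw [show ((0:Fin 3).castSucc) = (0:Fin 4) from rfl, show ((0:Fin 3).succ) = (1:Fin 4) from rfl] at e01
  rw [show ((1:Fin 3).castSucc) = (1:Fin 4) from rfl, show ((1:Fin 3).succ) = (2:Fin 4) from rfl] at e12
  rw [show ((2:Fin 3).castSucc) = (2:Fin 4) from rfl, show ((2:Fin 3).succ) = (3:Fin 4) from rfl] at e23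
  have hfst : ∀ j, (f j).1 = (f 0).1 := by
    intro j
    fin_cases j
    · rfl
    · exact e01.1.symm
    · exact e12.1.symm.trans e01.1.symm
    · exact e23.1.symm.trans (e12.1.symm.trans e01.1.symm)
  set g : Fin 4 → Fin 4 := fun j => (f j).2 with hg
  have hginj : Function.Injective g := by
    intro j k h
    exact hinj (Prod.ext ((hfst j).trans (hfst k).symm) h)
  have key : ∀ g : Fin 4 → Fin 4, Function.Injective g → R4 (g 0) (g 1) → R4 (g 1) (g 2) →
      R4 (g 2) (g 3) → (R4 (g 0) (g 2) ∨ R4 (g 0) (g 3) ∨ R4 (g 1) (g 3)) := by decide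
  rcases key g hginj e01.2 e12.2 e23.2 with h | h | h
  · exact h02 ((adjG _ _).2 ⟨(hfst 0).trans (hfst 2).symm, h⟩)
  · exact h03 ((adjG _ _).2 ⟨(hfst 0).trans (hfst 3).symm, h⟩)
  · exact h13 ((adjG _ _).2 ⟨(hfst 1).trans (hfst 3).symm, h⟩)

lemma maxRainbow_aux {I C : Type*} (b : I → C)
    (phi : Sym2 (I × Fin 4) → C)
    (hb : ∀ i, phi s((i, 1), (i, 2)) = b i)
    (hchord : ∀ i, phi s((i, 0), (i, 3)) = b i) :
    maxRainbow (SimpleGraph.fromEdgeSet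
      ({p | ∃ (i : I) (j : Fin 3), p = s((i, j.castSucc), (i, j.succ))} ∪
        {p | ∃ i : I, p = s((i, 0), (i, 3))})) phi =
    maxRainbow (SimpleGraph.fromEdgeSet
      {p | ∃ (i : I) (j : Fin 3), p = s((i, j.castSucc), (i, j.succ))}) phi := by
  classical
  set G := SimpleGraph.fromEdgeSet
      ({p | ∃ (i : I) (j : Fin 3), p = s((i, j.castSucc), (i, j.succ))} ∪
        {p | ∃ i : I, p = s((i, 0), (i, 3))}) with hGdef
  set L := SimpleGraph.fromEdgeSet
      {p | ∃ (i : I) (j : Fin 3), p = s((i, j.castSucc), (i, j.succ))} with hLdef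
  set P : Sym2 (I × Fin 4) → Prop := fun e => ∃ i : I, e = s((i, 0), (i, 3)) with hP
  have chord_inj : ∀ i i' : I, s(((i:I), (0:Fin 4)), (i, 3)) = s((i', 0), (i', 3)) → i = i' := by
    intro i i' h
    rw [pairEq] at h
    exact h.1
  set σ : Sym2 (I × Fin 4) → Sym2 (I × Fin 4) :=
    fun e => if h : P e then s((h.choose, 1), (h.choose, 2)) else e with hσ
  have hσ_not : ∀ e, ¬ P e → σ e = e := fun e h => dif_neg h
  have hσ_chord : ∀ i : I, σ s((i, 0), (i, 3)) = s((i, 1), (i, 2)) := by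
    intro i
    have hPe : P s(((i:I), (0:Fin 4)), (i, 3)) := ⟨i, rfl⟩
    rw [hσ]
    simp only [dif_pos hPe]
    exact (congrArg (fun t : I => s(((t,1) : I × Fin 4),(t,2))) (chord_inj i _ hPe.choose_spec)).symm
  have hphiσ : ∀ e, phi (σ e) = phi e := by
    intro e
    by_cases h : P e
    · obtain ⟨i, rfl⟩ := h
      rw [hσ_chord, hb, hchord]
    · rw [hσ_not e h]
  -- set equality of achievable sizes
  have hsets : {n : ℕ | ∃ M, RainbowMatching G phi M ∧ M.ncard = n} =
      {n : ℕ | ∃ M, RainbowMatching L phi M ∧ M.ncard = n} := by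
    ext n
    simp only [Set.mem_setOf_eq]
    constructor
    · rintro ⟨M, ⟨hME, hdisj, hinjphi⟩, rfl⟩
      -- helper: edges of M containing (i,1) or (i,2)
      have mem1 : ∀ (i : I), ∀ e ∈ M, ((i, (1:Fin 4)) : I × Fin 4) ∈ e →
          e = s((i,0),(i,1)) ∨ e = s((i,1),(i,2)) := by
        intro i e he hv
        obtain ⟨w, rfl⟩ := Sym2.mem_iff_exists.1 hv
        have hadj : G.Adj (i,1) w := (SimpleGraph.mem_edgeSet _).1 (hME he)
        rw [hGdef, adjG] at hadj
        obtain ⟨h1, h2⟩ := hadj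
        rcases (by decide : ∀ y : Fin 4, R4 1 y → y = 0 ∨ y = 2) w.2 h2 with h | h
        · left
          rw [show w = ((i,0) : I × Fin 4) from Prod.ext h1.symm h, Sym2.eq_swap]
        · right
          rw [show w = ((i,2) : I × Fin 4) from Prod.ext h1.symm h]
      have mem2 : ∀ (i : I), ∀ e ∈ M, ((i, (2:Fin 4)) : I × Fin 4) ∈ e →
          e = s((i,1),(i,2)) ∨ e = s((i,2),(i,3)) := by
        intro i e he hv
        obtain ⟨w, rfl⟩ := Sym2.mem_iff_exists.1 hv
        have hadj : G.Adj (i,2) w := (SimpleGraph.mem_edgeSet _).1 (hME he)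
        rw [hGdef, adjG] at hadj
        obtain ⟨h1, h2⟩ := hadj
        rcases (by decide : ∀ y : Fin 4, R4 2 y → y = 1 ∨ y = 3) w.2 h2 with h | h
        · left
          rw [show w = ((i,1) : I × Fin 4) from Prod.ext h1.symm h, Sym2.eq_swap]
        · right
          rw [show w = ((i,3) : I × Fin 4) from Prod.ext h1.symm h]
      have hC : ∀ (i : I), s((i,(0:Fin 4)),(i,3)) ∈ M → ∀ e ∈ M, e ≠ s((i,0),(i,3)) →
          ((i,(1:Fin 4)) : I × Fin 4) ∉ e ∧ ((i,(2:Fin 4)) : I × Fin 4) ∉ e := by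
        intro i hf e he hne
        constructor
        · intro hv
          rcases mem1 i e he hv with rfl | rfl
          · exact hdisj _ he _ hf hne (i,0) (by simp) (by simp)
          · exact hne (hinjphi he hf (by rw [hb i, hchord i]))
        · intro hv
          rcases mem2 i e he hv with rfl | rfl
          · exact hne (hinjphi he hf (by rw [hb i, hchord i]))
          · exact hdisj _ he _ hf hne (i,3) (by simp) (by simp)
      have hσinj : Set.InjOn σ M := by
        intro e he f hf h
        by_cases he' : P e <;> by_cases hf' : P f
        · obtain ⟨i, rfl⟩ := he'
          obtain ⟨i', rfl⟩ := hf'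
          rw [hσ_chord, hσ_chord, pairEq] at h
          have hii : i = i' := h.1
          rw [hii]
        · obtain ⟨i, rfl⟩ := he'
          rw [hσ_chord, hσ_not f hf'] at h
          have hc2 : phi (s(((i:I),(0:Fin 4)),(i,3))) = phi f := by rw [← h, hb i, hchord i]
          exact absurd ⟨i, (hinjphi he hf hc2).symm⟩ hf'
        · obtain ⟨i, rfl⟩ := hf'
          rw [hσ_chord, hσ_not e he'] at h
          have hc2 : phi e = phi (s(((i:I),(0:Fin 4)),(i,3))) := by rw [h, hb i, hchord i]
          exact absurd ⟨i, hinjphi he hf hc2⟩ he'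
        · rw [hσ_not e he', hσ_not f hf'] at h
          exact h
      have hmain : ∀ e ∈ M, ∀ f ∈ M, e ≠ f → ∀ v, v ∈ σ e → v ∉ σ f := by
        intro e he f hf hne v hv hv'
        by_cases he' : P e <;> by_cases hf' : P f
        · obtain ⟨i, rfl⟩ := he'
          obtain ⟨i', rfl⟩ := hf'
          rw [hσ_chord] at hv hv'
          have hii : i ≠ i' := fun h => hne (by rw [h])
          rcases Sym2.mem_iff.1 hv with rfl | rfl <;>
            rcases Sym2.mem_iff.1 hv' with h | h <;>
              exact hii (congrArg Prod.fst h)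
        · obtain ⟨i, rfl⟩ := he'
          rw [hσ_chord] at hv
          rw [hσ_not f hf'] at hv'
          have := hC i he f hf (Ne.symm hne)
          rcases Sym2.mem_iff.1 hv with rfl | rfl
          · exact this.1 hv'
          · exact this.2 hv'
        · obtain ⟨i, rfl⟩ := hf'
          rw [hσ_chord] at hv'
          rw [hσ_not e he'] at hv
          have := hC i hf e he hne
          rcases Sym2.mem_iff.1 hv' with rfl | rfl
          · exact this.1 hv
          · exact this.2 hv
        · rw [hσ_not e he'] at hv
          rw [hσ_not f hf'] at hv'
          exact hdisj e he f hf hne v hv hv'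
      refine ⟨σ '' M, ⟨?_, ?_, ?_⟩, Set.ncard_image_of_injOn hσinj⟩
      · rintro _ ⟨e, he, rfl⟩
        rw [hLdef, edgeSet_fromEdgeSet]
        by_cases h : P e
        · obtain ⟨i, rfl⟩ := h
          rw [hσ_chord]
          refine ⟨⟨i, 1, rfl⟩, ?_⟩
          simp [Sym2.isDiag_iff_proj_eq]
        · rw [hσ_not e h]
          have := hME he
          rw [hGdef, edgeSet_fromEdgeSet] at this
          obtain ⟨h1 | h1, h2⟩ := this
          · exact ⟨h1, h2⟩
          · exact absurd h1 h
      · rintro _ ⟨e, he, rfl⟩ _ ⟨f, hf, rfl⟩ hne v hv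
        exact hmain e he f hf (fun h => hne (by rw [h])) v hv
      · rintro _ ⟨e, he, rfl⟩ _ ⟨f, hf, rfl⟩ h
        rw [hphiσ, hphiσ] at h
        rw [hinjphi he hf h]
    · rintro ⟨M, ⟨hME, hdisj, hinjphi⟩, rfl⟩
      refine ⟨M, ⟨?_, hdisj, hinjphi⟩, rfl⟩
      refine hME.trans ?_
      rw [hGdef, hLdef, edgeSet_fromEdgeSet, edgeSet_fromEdgeSet]
      exact Set.diff_subset_diff_left Set.subset_union_left
  unfold maxRainbow
  rw [hsets]

/-- Let `L` be an edge-colored linear forest whose components are paths with three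
edges, indexed by `I`, the path `i` having edges colored `a i`, `b i`, `c i` in order.
Form `G` by adding, in each component, an edge between the two endpoints of the path,
colored `b i`.  Then `G` has no induced `P₄`, and the maximum rainbow matching sizes
of `G` and `L` coincide. -/
theorem maxRainbow_close_paths_to_C4 {I C : Type*} [Fintype I] [DecidableEq I]
    (a b c : I → C)
    (L G : SimpleGraph (I × Fin 4))
    (hL : L = SimpleGraph.fromEdgeSet
      {p | ∃ (i : I) (j : Fin 3), p = s((i, j.castSucc), (i, j.succ))})
    (hG : G = SimpleGraph.fromEdgeSet
      ({p | ∃ (i : I) (j : Fin 3), p = s((i, j.castSucc), (i, j.succ))} ∪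
        {p | ∃ i : I, p = s((i, 0), (i, 3))}))
    (phi : Sym2 (I × Fin 4) → C)
    (ha : ∀ i, phi s((i, 0), (i, 1)) = a i)
    (hb : ∀ i, phi s((i, 1), (i, 2)) = b i)
    (hc : ∀ i, phi s((i, 2), (i, 3)) = c i)
    (hchord : ∀ i, phi s((i, 0), (i, 3)) = b i) :
    (¬ ∃ f : Fin 4 → I × Fin 4, Function.Injective f ∧
        (∀ j : Fin 3, G.Adj (f j.castSucc) (f j.succ)) ∧
        ¬ G.Adj (f 0) (f 2) ∧ ¬ G.Adj (f 0) (f 3) ∧ ¬ G.Adj (f 1) (f 3)) ∧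
    maxRainbow G phi = maxRainbow L phi := by
  subst hL hG
  exact ⟨noP4_aux _ rfl, maxRainbow_aux b phi hb hchord⟩
end

section
/- Let F be a forest containing no P_5 as a subgraph, and let E' be the set of edges of F both of whose endpoints have degree at least 2. Then |E'| is at most the number of components of F containing a P_4 as a subgraph, and F − E' is a forest all of whose components are stars. -/
open SimpleGraph

/-- The connected component of `K` is a star: some vertex `x` lies on all its edges. -/
def IsStarComponent {V : Type*} (G : SimpleGraph V) (K : G.ConnectedComponent) : Prop :=
  ∃ x ∈ K.supp, ∀ u v, G.Adj u v → u ∈ K.supp → (u = x ∨ v = x)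

/-- The edges of `G` both of whose endpoints have degree at least 2. -/
def innerEdges {V : Type*} (G : SimpleGraph V) : Set (Sym2 V) :=
  {e | e ∈ G.edgeSet ∧ ∀ v ∈ e, 2 ≤ (G.neighborSet v).ncard}

set_option linter.unusedSectionVars false

section Aux
variable {V : Type*} (G : SimpleGraph V) [Fintype V]

lemma my_noTri (hforest : G.IsAcyclic) {a b c : V}
    (h1 : G.Adj a b) (h2 : G.Adj b c) (h3 : G.Adj a c) : False := by
  have hq : (Walk.cons h1 (Walk.cons h2 Walk.nil) : G.Walk a c).IsPath := by
    simp [Walk.isPath_def, h1.ne, h2.ne, h3.ne]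
  have := isAcyclic_iff_path_unique.mp hforest (Path.singleton h3) ⟨_, hq⟩
  have hlen := congrArg (fun p : G.Path a c => p.1.length) this
  simp [Path.singleton] at hlen

lemma my_noC4 (hforest : G.IsAcyclic) {a b c d : V}
    (h1 : G.Adj a b) (h2 : G.Adj b c) (h3 : G.Adj c d) (h4 : G.Adj d a)
    (hac : a ≠ c) (hbd : b ≠ d) : False := by
  have hq : (Walk.cons h1 (Walk.cons h2 (Walk.cons h3 Walk.nil)) : G.Walk a d).IsPath := by
    simp [Walk.isPath_def, h1.ne, h2.ne, h3.ne, hac, hbd, (h4.symm).ne]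
  have := isAcyclic_iff_path_unique.mp hforest (Path.singleton h4.symm) ⟨_, hq⟩
  have hlen := congrArg (fun p : G.Path a d => p.1.length) this
  simp [Path.singleton] at hlen

lemma my_noP5 (hP5 : ¬ ∃ f : Fin 5 → V, Function.Injective f ∧
      ∀ i : Fin 4, G.Adj (f i.castSucc) (f i.succ))
    {a b c d e : V}
    (h1 : G.Adj a b) (h2 : G.Adj b c) (h3 : G.Adj c d) (h4 : G.Adj d e)
    (hac : a ≠ c) (had : a ≠ d) (hae : a ≠ e) (hbd : b ≠ d) (hbe : b ≠ e)
    (hce : c ≠ e) : False := by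
  apply hP5
  refine ⟨![a,b,c,d,e], ?_, ?_⟩
  · intro i j hij
    fin_cases i <;> fin_cases j <;> simp_all [h1.ne, h2.ne, h3.ne, h4.ne]
  · intro i
    fin_cases i <;> simpa using ‹_›

lemma exists_other_nbr {v : V} (h2 : 2 ≤ (G.neighborSet v).ncard) (u : V) :
    ∃ b, G.Adj v b ∧ b ≠ u := by
  by_contra hcon
  push_neg at hcon
  have hsub : G.neighborSet v ⊆ {u} := fun b hb => hcon b hb
  have := Set.ncard_le_ncard hsub (Set.finite_singleton u)
  rw [Set.ncard_singleton] at this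
  omega

lemma claimD (hforest : G.IsAcyclic)
    (hP5 : ¬ ∃ f : Fin 5 → V, Function.Injective f ∧
      ∀ i : Fin 4, G.Adj (f i.castSucc) (f i.succ))
    {u v : V} (huv : G.Adj u v)
    (hu2 : 2 ≤ (G.neighborSet u).ncard) (hv2 : 2 ≤ (G.neighborSet v).ncard) :
    ∀ z, G.Reachable z u → z = u ∨ z = v ∨ G.Adj u z ∨ G.Adj v z := by
  obtain ⟨a, hau, hav⟩ := exists_other_nbr G hu2 v
  obtain ⟨b, hbv, hbu⟩ := exists_other_nbr G hv2 u
  intro z hz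
  obtain ⟨p⟩ := hz
  induction p with
  | nil => exact Or.inl rfl
  | cons h q ih =>
    rename_i z' m u'
    rcases ih huv hu2 hau hbu with hm | hm | hm | hm
    · subst hm; exact Or.inr (Or.inr (Or.inl h.symm))
    · subst hm; exact Or.inr (Or.inr (Or.inr h.symm))
    · -- Adj u' m
      by_contra hcon
      push_neg at hcon
      obtain ⟨hzu, hzv, hadju, hadjv⟩ := hcon
      have hmv : m ≠ v := by
        rintro rfl; exact hadjv h.symm
      have hmb : m ≠ b := by
        rintro rfl; exact my_noTri G hforest huv hbv hm
      exact my_noP5 G hP5 h hm.symm huv hbv hzu hzv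
        (fun hzb => hadjv (hzb ▸ hbv)) hmv hmb (fun huvb => hbu huvb.symm)
    · -- Adj v m
      by_contra hcon
      push_neg at hcon
      obtain ⟨hzu, hzv, hadju, hadjv⟩ := hcon
      have hmu : m ≠ u' := by
        rintro rfl; exact hadju h.symm
      have hma : m ≠ a := by
        rintro rfl; exact my_noTri G hforest huv.symm hau hm
      exact my_noP5 G hP5 h hm.symm huv.symm hau hzv hzu
        (fun hza => hadju (hza ▸ hau)) hmu hma (fun hva => hav hva.symm)
end Aux

section Aux2
variable {V : Type*} (G : SimpleGraph V) [Fintype V]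

lemma B_aux (hforest : G.IsAcyclic)
    (hP5 : ¬ ∃ f : Fin 5 → V, Function.Injective f ∧
      ∀ i : Fin 4, G.Adj (f i.castSucc) (f i.succ))
    {u v y : V} (huv : G.Adj u v) (hv2 : 2 ≤ (G.neighborSet v).ncard)
    (huy : G.Adj u y) (hy2 : 2 ≤ (G.neighborSet y).ncard) (hyv : y ≠ v) : False := by
  obtain ⟨b2, hb2y, hb2u⟩ := exists_other_nbr G hy2 u
  obtain ⟨b', hb'v, hb'u⟩ := exists_other_nbr G hv2 u
  refine my_noP5 G hP5 hb2y.symm huy.symm huv hb'v hb2u ?_ ?_ hyv ?_ (Ne.symm hb'u)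
  · rintro rfl; exact my_noTri G hforest huv hb2y.symm huy
  · rintro rfl; exact my_noC4 G hforest huy.symm huv hb'v hb2y.symm hyv (Ne.symm hb2u)
  · rintro rfl; exact my_noTri G hforest huv hb'v huy

lemma claimB (hforest : G.IsAcyclic)
    (hP5 : ¬ ∃ f : Fin 5 → V, Function.Injective f ∧
      ∀ i : Fin 4, G.Adj (f i.castSucc) (f i.succ))
    {u v x y : V} (huv : G.Adj u v)
    (hu2 : 2 ≤ (G.neighborSet u).ncard) (hv2 : 2 ≤ (G.neighborSet v).ncard)
    (hxy : G.Adj x y)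
    (hx2 : 2 ≤ (G.neighborSet x).ncard) (hy2 : 2 ≤ (G.neighborSet y).ncard)
    (hr : G.Reachable x u) (hne : s(u,v) ≠ s(x,y)) : False := by
  have hry : G.Reachable y u := (hxy.symm.reachable).trans hr
  rcases claimD G hforest hP5 huv hu2 hv2 x hr with rfl | rfl | hux | hvx
  · -- x = u
    by_cases hyv : y = v
    · subst hyv; exact hne rfl
    · exact B_aux G hforest hP5 huv hv2 hxy hy2 hyv
  · -- x = v
    by_cases hyu : y = u
    · subst hyu; exact hne (Sym2.eq_swap)
    · exact B_aux G hforest hP5 huv.symm hu2 hxy hy2 hyu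
  · -- Adj u x
    rcases claimD G hforest hP5 huv hu2 hv2 y hry with rfl | rfl | huy | hvy
    · -- y = u
      by_cases hxv : x = v
      · subst hxv; exact hne (Sym2.eq_swap)
      · exact B_aux G hforest hP5 huv hv2 hux hx2 hxv
    · -- y = v
      exact my_noTri G hforest huv hxy.symm hux
    · exact my_noTri G hforest hux hxy huy
    · -- Adj v y
      by_cases hxv : x = v
      · subst hxv
        by_cases hyu : y = u
        · subst hyu; exact hne (Sym2.eq_swap)
        · exact B_aux G hforest hP5 huv.symm hu2 hxy hy2 hyu
      · by_cases hyu : y = u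
        · subst hyu
          exact B_aux G hforest hP5 huv hv2 hux hx2 hxv
        · exact my_noC4 G hforest hux.symm huv hvy hxy.symm hxv (Ne.symm hyu)
  · -- Adj v x
    rcases claimD G hforest hP5 huv hu2 hv2 y hry with rfl | rfl | huy | hvy
    · -- y = u
      exact my_noTri G hforest hvx hxy huv.symm
    · -- y = v
      by_cases hxu : x = u
      · subst hxu; exact hne rfl
      · exact B_aux G hforest hP5 huv.symm hu2 hvx hx2 hxu
    · -- Adj u y
      by_cases hxu : x = u
      · subst hxu
        by_cases hyv : y = v
        · subst hyv; exact hne rfl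
        · exact B_aux G hforest hP5 huv hv2 hxy hy2 hyv
      · by_cases hyv : y = v
        · subst hyv
          exact B_aux G hforest hP5 huv.symm hu2 hxy.symm hx2 hxu
        · exact my_noC4 G hforest hvx.symm huv.symm huy hxy.symm hxu (Ne.symm hyv)
    · exact my_noTri G hforest hvx hxy hvy
end Aux2

section Aux3
variable {V : Type*} (G : SimpleGraph V) [Fintype V]

lemma del_noP4 {u v w z : V}
    (h1 : (G.deleteEdges (innerEdges G)).Adj u v)
    (h2 : (G.deleteEdges (innerEdges G)).Adj v w)
    (h3 : (G.deleteEdges (innerEdges G)).Adj w z)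
    (huw : u ≠ w) (hvz : v ≠ z) : False := by
  rw [deleteEdges_adj] at h1 h2 h3
  obtain ⟨hvw, hnot⟩ := h2
  have : ¬ ∀ m ∈ s(v,w), 2 ≤ (G.neighborSet m).ncard := fun hall =>
    hnot ⟨(G.mem_edgeSet).mpr hvw, hall⟩
  push_neg at this
  obtain ⟨m, hm, hmlt⟩ := this
  rw [Sym2.mem_iff] at hm
  rcases hm with rfl | rfl
  · have hsub : ({u, w} : Set V) ⊆ G.neighborSet m := by
      rintro t (rfl | rfl)
      · exact h1.1.symm
      · exact hvw
    have := Set.ncard_le_ncard hsub (Set.toFinite _)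
    rw [Set.ncard_pair huw] at this
    omega
  · have hsub : ({v, z} : Set V) ⊆ G.neighborSet m := by
      rintro t (rfl | rfl)
      · exact hvw.symm
      · exact h3.1
    have := Set.ncard_le_ncard hsub (Set.toFinite _)
    rw [Set.ncard_pair hvz] at this
    omega

lemma star_center {x c1 c2 : V}
    (h1 : (G.deleteEdges (innerEdges G)).Adj x c1)
    (h2 : (G.deleteEdges (innerEdges G)).Adj x c2) (h12 : c1 ≠ c2) :
    IsStarComponent (G.deleteEdges (innerEdges G))
      ((G.deleteEdges (innerEdges G)).connectedComponentMk x) := by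
  set G' := G.deleteEdges (innerEdges G) with hG'
  have claimC : ∀ z, G'.Walk z x → z = x ∨ G'.Adj x z := by
    intro z p
    induction p with
    | nil => exact Or.inl rfl
    | cons h q ih =>
      rename_i z' m x'
      rcases ih h1 h2 with hm | hm
      · subst hm; exact Or.inr h.symm
      · by_contra hcon
        push_neg at hcon
        obtain ⟨hzx, hzadj⟩ := hcon
        have hc : ∃ c, G'.Adj x' c ∧ c ≠ m := by
          rcases eq_or_ne m c1 with rfl | hmc
          · exact ⟨c2, h2, Ne.symm h12⟩
          · exact ⟨c1, h1, Ne.symm hmc⟩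
        obtain ⟨c, hxc, hcm⟩ := hc
        exact del_noP4 G h hm.symm hxc hzx (Ne.symm hcm)
  refine ⟨x, (ConnectedComponent.mem_supp_iff _ _).mpr rfl, ?_⟩
  intro p q hpq hp
  have hrp : G'.Reachable p x :=
    (ConnectedComponent.eq).mp ((ConnectedComponent.mem_supp_iff _ _).mp hp)
  obtain ⟨wk⟩ := hrp
  rcases claimC p wk with rfl | hadj
  · exact Or.inl rfl
  · by_cases hq : q = x
    · exact Or.inr hq
    · exfalso
      have hc : ∃ c, G'.Adj x c ∧ c ≠ p := by
        rcases eq_or_ne p c1 with rfl | hpc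
        · exact ⟨c2, h2, Ne.symm h12⟩
        · exact ⟨c1, h1, Ne.symm hpc⟩
      obtain ⟨c, hxc, hcp⟩ := hc
      exact del_noP4 G hpq.symm hadj.symm hxc hq (Ne.symm hcp)

end Aux3

section Aux4
variable {V : Type*} (G : SimpleGraph V) [Fintype V]

lemma claimA (hforest : G.IsAcyclic)
    {u v : V} (huv : G.Adj u v)
    (hu2 : 2 ≤ (G.neighborSet u).ncard) (hv2 : 2 ≤ (G.neighborSet v).ncard) :
    ∃ f : Fin 4 → V, Function.Injective f ∧
      (∀ i, f i ∈ (G.connectedComponentMk u).supp) ∧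
      ∀ i : Fin 3, G.Adj (f i.castSucc) (f i.succ) := by
  obtain ⟨a, hau, hav⟩ := exists_other_nbr G hu2 v
  obtain ⟨b, hbv, hbu⟩ := exists_other_nbr G hv2 u
  have hab : a ≠ b := by
    rintro rfl; exact my_noTri G hforest huv hbv hau
  refine ⟨![a,u,v,b], ?_, ?_, ?_⟩
  · intro i j hij
    fin_cases i <;> fin_cases j <;>
      simp_all [hau.ne, hav, hab, huv.ne, hbu, hbv.ne, Ne.symm hbu]
  · intro i
    fin_cases i <;>
      simp only [Matrix.cons_val_zero, Matrix.cons_val_one, Matrix.head_cons,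
        Matrix.cons_val_two, Matrix.tail_cons, Matrix.cons_val_three] <;>
      rw [ConnectedComponent.mem_supp_iff]
    · exact ConnectedComponent.sound hau.symm.reachable
    · rfl
    · exact ConnectedComponent.sound huv.symm.reachable
    · exact ConnectedComponent.sound (hbv.symm.reachable.trans huv.symm.reachable)
  · intro i
    fin_cases i <;> simp only []
    · exact hau.symm
    · exact huv
    · exact hbv
end Aux4


/-- Let `F` be a forest with no `P₅` subgraph, and let `E'` be the set of edges both of
whose endpoints have degree at least 2.  Then `|E'|` is at most the number of
components of `F` containing a `P₄` subgraph, and deleting `E'` leaves a forest all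
of whose components are stars. -/
theorem innerEdges_of_P5_free_forest {V : Type*} [Fintype V]
    (G : SimpleGraph V) (hforest : G.IsAcyclic)
    (hP5 : ¬ ∃ f : Fin 5 → V, Function.Injective f ∧
      ∀ i : Fin 4, G.Adj (f i.castSucc) (f i.succ)) :
    (innerEdges G).ncard ≤
      {K : G.ConnectedComponent | ∃ f : Fin 4 → V, Function.Injective f ∧
        (∀ i, f i ∈ K.supp) ∧ ∀ i : Fin 3, G.Adj (f i.castSucc) (f i.succ)}.ncard ∧
    ∀ K : (G.deleteEdges (innerEdges G)).ConnectedComponent,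
      IsStarComponent (G.deleteEdges (innerEdges G)) K := by
  constructor
  · have hout : ∀ e : Sym2 V, s(e.out.1, e.out.2) = e := by
      intro e
      show Sym2.mk e.out.1 e.out.2 = e
      rw [Sym2.mk, Prod.mk.eta]
      exact Quot.out_eq e
    have hadj : ∀ e ∈ innerEdges G, G.Adj e.out.1 e.out.2 := by
      intro e he
      have : s(e.out.1, e.out.2) ∈ G.edgeSet := by rw [hout e]; exact he.1
      exact (G.mem_edgeSet).mp this
    apply Set.ncard_le_ncard_of_injOn (fun e => G.connectedComponentMk e.out.1)
    · intro e he
      simp only [Set.mem_setOf_eq]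
      exact claimA G hforest (hadj e he) (he.2 _ (Sym2.out_fst_mem e))
        (he.2 _ (Sym2.out_snd_mem e))
    · intro e1 h1 e2 h2 heq
      by_contra hne12
      have hr : G.Reachable e2.out.1 e1.out.1 := (ConnectedComponent.eq).mp heq.symm
      have hne' : s(e1.out.1, e1.out.2) ≠ s(e2.out.1, e2.out.2) := by
        rw [hout e1, hout e2]; exact hne12
      exact claimB G hforest hP5 (hadj e1 h1) (h1.2 _ (Sym2.out_fst_mem e1))
        (h1.2 _ (Sym2.out_snd_mem e1)) (hadj e2 h2) (h2.2 _ (Sym2.out_fst_mem e2))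
        (h2.2 _ (Sym2.out_snd_mem e2)) hr hne'
  · intro K
    induction K using ConnectedComponent.ind with
    | _ w =>
    set G' := G.deleteEdges (innerEdges G) with hG'
    by_cases h1 : ∃ a, G'.Adj w a
    · obtain ⟨a, ha⟩ := h1
      by_cases h2 : ∃ b, G'.Adj a b ∧ b ≠ w
      · obtain ⟨b, hb, hbw⟩ := h2
        have hstar := star_center G ha.symm hb (Ne.symm hbw)
        have hcomp : (G'.connectedComponentMk a) = G'.connectedComponentMk w :=
          ConnectedComponent.sound ha.symm.reachable
        rwa [hcomp] at hstar
      · push_neg at h2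
        by_cases h3 : ∃ b, G'.Adj w b ∧ b ≠ a
        · obtain ⟨b, hb, hba⟩ := h3
          exact star_center G ha hb (Ne.symm hba)
        · push_neg at h3
          refine ⟨w, (ConnectedComponent.mem_supp_iff _ _).mpr rfl, ?_⟩
          have key : ∀ z, G'.Walk z w → z = w ∨ z = a := by
            intro z p
            induction p with
            | nil => exact Or.inl rfl
            | cons h q ih =>
              rename_i z' m w'
              rcases ih ha h2 h3 with hm | hm
              · subst hm; exact Or.inr (h3 z' h.symm)
              · subst hm; exact Or.inl (h2 z' h.symm)
          intro p q hpq hp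
          have hrp : G'.Reachable p w :=
            (ConnectedComponent.eq).mp ((ConnectedComponent.mem_supp_iff _ _).mp hp)
          obtain ⟨wk⟩ := hrp
          rcases key p wk with rfl | rfl
          · exact Or.inl rfl
          · exact Or.inr (h2 q hpq)
    · refine ⟨w, (ConnectedComponent.mem_supp_iff _ _).mpr rfl, ?_⟩
      intro p q hpq hp
      exfalso
      have hr : G'.Reachable w p :=
        ((ConnectedComponent.eq).mp ((ConnectedComponent.mem_supp_iff _ _).mp hp)).symm
      obtain ⟨wk⟩ := hr
      cases wk with
      | nil => exact h1 ⟨q, hpq⟩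
      | cons h q' => exact h1 ⟨_, h⟩
end
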